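/- arXiv:1706.03306 — 10 statements merged into one kernel-verified Lean document; each statement's English description precedes it below -/
import Mathlib

section
/- There exists a constant c > 0 and an integer N such that for all integers n ≥ N, f_3(n, 9, 6) ≥ c · n^{5/3}. -/
open Finset

/-- A hypergraph `H` is `G_r(v,e)`-free if any `e` distinct edges span at least `v+1` vertices. -/
def GFree {V : Type*} [DecidableEq V] (H : Finset (Finset V)) (v e : ℕ) : Prop :=
  ∀ S ⊆ H, S.card = e → v + 1 ≤ (S.biUnion id).card

/-- `extremalF r n v e` is the maximum number of edges of a `G_r(v,e)`-free `r`-uniform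
hypergraph on `n` vertices. -/
noncomputable def extremalF (r n v e : ℕ) : ℕ :=
  sSup {m : ℕ | ∃ H : Finset (Finset (Fin n)),
    (∀ A ∈ H, A.card = r) ∧ GFree H v e ∧ H.card = m}

lemma descFactorial_mul_choose_eq : ∀ j k m : ℕ, j ≤ k → k ≤ m →
    Nat.descFactorial k j * Nat.choose m k
      = Nat.descFactorial m j * Nat.choose (m - j) (k - j) := by
  intro j
  induction j with
  | zero => intro k m _ _; simp
  | succ i ih =>
    intro k m hj hk
    have hik : i ≤ k := by omega
    have h1 : m - i = (m - (i + 1)) + 1 := by omega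
    have h2 : k - i = (k - (i + 1)) + 1 := by omega
    have key : (m - i) * Nat.choose (m - (i + 1)) (k - (i + 1))
        = Nat.choose (m - i) (k - i) * (k - i) := by
      rw [h1, h2]; exact Nat.add_one_mul_choose_eq _ _
    calc Nat.descFactorial k (i + 1) * Nat.choose m k
        = (k - i) * (Nat.descFactorial k i * Nat.choose m k) := by
          rw [Nat.descFactorial_succ]; ring
      _ = (k - i) * (Nat.descFactorial m i * Nat.choose (m - i) (k - i)) := by
          rw [ih k m hik hk]
      _ = Nat.descFactorial m i * (Nat.choose (m - i) (k - i) * (k - i)) := by ring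
      _ = Nat.descFactorial m i * ((m - i) * Nat.choose (m - (i + 1)) (k - (i + 1))) := by
          rw [key]
      _ = Nat.descFactorial m (i + 1) * Nat.choose (m - (i + 1)) (k - (i + 1)) := by
          rw [Nat.descFactorial_succ]; ring

lemma count_supersets {α : Type*} [DecidableEq α] (T S : Finset α) (M : ℕ) (hST : S ⊆ T) :
    ((powersetCard M T).filter (fun H => S ⊆ H)).card
      ≤ (T.card - S.card).choose (M - S.card) := by
  have h : ((powersetCard M T).filter (fun H => S ⊆ H)).card
      ≤ (powersetCard (M - S.card) (T \ S)).card := by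
    apply card_le_card_of_injOn (fun H => H \ S)
    · intro H hH
      simp only [coe_filter, Set.mem_setOf_eq, mem_powersetCard] at hH
      obtain ⟨⟨hHT, hcard⟩, hSH⟩ := hH
      simp only [mem_coe, mem_powersetCard]
      exact ⟨sdiff_subset_sdiff hHT Subset.rfl, by rw [card_sdiff_of_subset hSH, hcard]⟩
    · intro H1 h1 H2 h2 heq
      simp only [coe_filter, Set.mem_setOf_eq, mem_powersetCard] at h1 h2
      have h3 : H1 \ S ∪ S = H2 \ S ∪ S := by simp only at heq; rw [heq]
      rwa [sdiff_union_of_subset h1.2, sdiff_union_of_subset h2.2] at h3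
  rwa [card_powersetCard, card_sdiff_of_subset hST] at h

theorem f3_96_lower : ∃ c : ℝ, 0 < c ∧ ∃ N : ℕ, ∀ n : ℕ, N ≤ n →
    c * (n : ℝ) ^ ((5 : ℝ) / 3) ≤ (extremalF 3 n 9 6 : ℝ) := by
  classical
  refine ⟨1/2, by norm_num, (64 * Nat.choose 84 6 * 96 ^ 6) ^ 3, fun n hn => ?_⟩
  set K : ℕ := Nat.choose 84 6 with hKdef
  have hK1 : 1 ≤ K := Nat.choose_pos (by norm_num)
  set E : ℕ := 64 * K * 96 ^ 6 with hEdef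
  have hE96 : 96 ≤ E := by
    calc (96 : ℕ) ≤ 64 * 1 * 96 ^ 6 := by norm_num
    _ ≤ 64 * K * 96 ^ 6 := by
      exact Nat.mul_le_mul_right _ (Nat.mul_le_mul_left _ hK1)
  have hnE : E ^ 3 ≤ n := hn
  have hn96 : 96 ≤ n := le_trans hE96 (le_trans (Nat.le_self_pow three_ne_zero E) hn)
  have hn9 : 9 ≤ n := by omega
  have hn1 : 1 ≤ n := by omega
  have hnR1 : (1 : ℝ) ≤ (n : ℝ) := by exact_mod_cast hn1
  have hnR0 : (0 : ℝ) < (n : ℝ) := by linarith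
  have hn96R : (96 : ℝ) ≤ (n : ℝ) := by exact_mod_cast hn96
  set x : ℝ := (n : ℝ) ^ ((5 : ℝ) / 3) with hxdef
  have hx_ge : (n : ℝ) ≤ x := by
    calc (n : ℝ) = (n : ℝ) ^ (1 : ℝ) := (Real.rpow_one _).symm
    _ ≤ x := Real.rpow_le_rpow_of_exponent_le hnR1 (by norm_num)
  have hx1 : (1 : ℝ) ≤ x := le_trans hnR1 hx_ge
  set M : ℕ := ⌈x⌉₊ with hMdef
  have hMx : x ≤ (M : ℝ) := Nat.le_ceil x
  have hM2x : (M : ℝ) ≤ 2 * x := by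
    have h := Nat.ceil_lt_add_one (by linarith : (0:ℝ) ≤ x)
    linarith
  have hMn : n ≤ M := by
    have : ((n : ℕ) : ℝ) ≤ (M : ℝ) := le_trans hx_ge hMx
    exact_mod_cast this
  have hM6 : 6 ≤ M := le_trans (by omega) hMn
  -----------------------------------------------------------------
  set N3 : ℕ := Nat.choose n 3 with hN3def
  have hN3R : (n : ℝ) ^ 3 / 48 ≤ (N3 : ℝ) := by
    have h1 : (n - 2) ^ 3 ≤ 6 * N3 := by
      have h2 : (n + 1 - 3) ^ 3 ≤ Nat.descFactorial n 3 := Nat.pow_sub_le_descFactorial n 3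
      have h3 : Nat.descFactorial n 3 = 6 * N3 := by
        rw [Nat.descFactorial_eq_factorial_mul_choose]; norm_num [Nat.factorial, hN3def]
      have h4 : n + 1 - 3 = n - 2 := by omega
      rw [h4, h3] at h2; exact h2
    have h1R : (((n : ℝ) - 2)) ^ 3 ≤ 6 * (N3 : ℝ) := by
      have := (Nat.cast_le (α := ℝ)).mpr h1
      push_cast at this
      rwa [Nat.cast_sub (by omega : 2 ≤ n)] at this
    have h5 : ((n : ℝ) / 2) ^ 3 ≤ ((n : ℝ) - 2) ^ 3 := by
      apply pow_le_pow_left₀ (by linarith) (by linarith)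
    nlinarith only [h5, h1R]
  have hn3R : (96 : ℝ) ^ 3 ≤ (n : ℝ) ^ 3 := by
    apply pow_le_pow_left₀ (by norm_num) hn96R
  -- M ≤ N3
  have hMN3R : (M : ℝ) ≤ (N3 : ℝ) := by
    have h43 : (96 : ℝ) ≤ (n : ℝ) ^ ((4 : ℝ) / 3) := by
      calc (96 : ℝ) ≤ (n : ℝ) := hn96R
      _ = (n : ℝ) ^ (1 : ℝ) := (Real.rpow_one _).symm
      _ ≤ (n : ℝ) ^ ((4 : ℝ) / 3) := Real.rpow_le_rpow_of_exponent_le hnR1 (by norm_num)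
    have hsplit : (n : ℝ) ^ 3 = x * (n : ℝ) ^ ((4 : ℝ) / 3) := by
      rw [hxdef, ← Real.rpow_add hnR0]
      norm_num
    have hx0 : (0 : ℝ) < x := by linarith
    calc (M : ℝ) ≤ 2 * x := hM2x
    _ ≤ x * (n : ℝ) ^ ((4 : ℝ) / 3) / 48 := by
      rw [le_div_iff₀ (by norm_num : (0:ℝ) < 48)]
      nlinarith only [h43, hx0]
    _ = (n : ℝ) ^ 3 / 48 := by rw [hsplit]
    _ ≤ (N3 : ℝ) := hN3R
  have hMN3 : M ≤ N3 := by exact_mod_cast hMN3R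
  have hN36 : 6 ≤ N3 := le_trans hM6 hMN3
  -- the key quantity bound : N3 - 5
  have hQR : (n : ℝ) ^ 3 / 96 ≤ ((N3 - 5 : ℕ) : ℝ) := by
    rw [Nat.cast_sub (by omega : 5 ≤ N3)]
    have : (480 : ℝ) ≤ (n : ℝ) ^ 3 := by nlinarith only [hn3R]
    linarith [hN3R]
  -- the hypergraph of all triples
  set T := powersetCard 3 (univ : Finset (Fin n)) with hTdef
  have hTcard : T.card = N3 := by
    rw [hTdef, card_powersetCard, card_univ, Fintype.card_fin]
  set BadAll := (powersetCard 6 T).filter (fun S => (S.biUnion id).card ≤ 9) with hBadAlldef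
  have hBadcard : BadAll.card ≤ Nat.choose n 9 * K := by
    have hsub : BadAll ⊆ (powersetCard 9 (univ : Finset (Fin n))).biUnion
        (fun U => powersetCard 6 (powersetCard 3 U)) := by
      intro S hS
      rw [hBadAlldef, mem_filter, mem_powersetCard] at hS
      obtain ⟨⟨hST, hS6⟩, hU9⟩ := hS
      obtain ⟨U, hUsub, hUuniv, hU⟩ := exists_subsuperset_card_eq
        (Finset.subset_univ (S.biUnion id)) hU9
        (by rw [card_univ, Fintype.card_fin]; exact hn9)
      rw [mem_biUnion]
      refine ⟨U, mem_powersetCard.mpr ⟨hUuniv, hU⟩, mem_powersetCard.mpr ⟨?_, hS6⟩⟩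
      intro A hA
      rw [mem_powersetCard]
      refine ⟨fun a ha => hUsub (mem_biUnion.mpr ⟨A, hA, ?_⟩), ?_⟩
      · simpa using ha
      · have h := hST hA
        rw [hTdef, mem_powersetCard] at h
        exact h.2
    calc BadAll.card ≤ _ := card_le_card hsub
    _ ≤ ∑ U ∈ powersetCard 9 (univ : Finset (Fin n)),
          (powersetCard 6 (powersetCard 3 U)).card := card_biUnion_le
    _ = ∑ _U ∈ powersetCard 9 (univ : Finset (Fin n)), K := by
        apply Finset.sum_congr rfl
        intro U hU
        rw [card_powersetCard, card_powersetCard, (mem_powersetCard.mp hU).2,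
          show Nat.choose 9 3 = 84 from by decide]
    _ = Nat.choose n 9 * K := by
        rw [Finset.sum_const, card_powersetCard, card_univ, Fintype.card_fin, smul_eq_mul]
  set P := powersetCard M T with hPdef
  have hPcard : P.card = Nat.choose N3 M := by rw [hPdef, card_powersetCard, hTcard]
  have hPne : P.Nonempty := by
    rw [hPdef]
    exact powersetCard_nonempty_of_le (by rw [hTcard]; exact hMN3)
  have hswap : ∑ H ∈ P, (BadAll.filter (fun S => S ⊆ H)).card
      = ∑ S ∈ BadAll, (P.filter (fun H => S ⊆ H)).card := by
    simp_rw [card_filter]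
    rw [Finset.sum_comm]
  have hsum : ∑ H ∈ P, (BadAll.filter (fun S => S ⊆ H)).card
      ≤ BadAll.card * Nat.choose (N3 - 6) (M - 6) := by
    rw [hswap]
    calc ∑ S ∈ BadAll, (P.filter (fun H => S ⊆ H)).card
        ≤ ∑ _S ∈ BadAll, Nat.choose (N3 - 6) (M - 6) := by
          apply Finset.sum_le_sum
          intro S hS
          rw [hBadAlldef, mem_filter, mem_powersetCard] at hS
          have h := count_supersets T S M hS.1.1
          rwa [hTcard, hS.1.2] at h
      _ = BadAll.card * Nat.choose (N3 - 6) (M - 6) := by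
          rw [Finset.sum_const, smul_eq_mul]
  -- the central numeric inequality
  have b3 : (N3 - 5) ^ 6 ≤ Nat.descFactorial N3 6 := by
    have h := Nat.pow_sub_le_descFactorial N3 6
    have h4 : N3 + 1 - 6 = N3 - 5 := by omega
    rwa [h4] at h
  have star : 2 * BadAll.card * Nat.descFactorial M 6 ≤ M * Nat.descFactorial N3 6 := by
    have b2 : Nat.descFactorial M 6 ≤ M ^ 6 := Nat.descFactorial_le_pow _ _
    have b4 : Nat.choose n 9 ≤ n ^ 9 := Nat.choose_le_pow _ _
    have main : 2 * (n ^ 9 * K) * M ^ 6 ≤ M * (N3 - 5) ^ 6 := by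
      rw [← Nat.cast_le (α := ℝ)]
      push_cast
      -- rpow facts
      have r9 : ((n : ℝ)) ^ (9 : ℕ) = (n : ℝ) ^ ((9 : ℝ)) := by
        rw [← Real.rpow_natCast (n : ℝ) 9]; norm_num
      have r18 : ((n : ℝ)) ^ (18 : ℕ)
          = (n : ℝ) ^ ((9 : ℝ)) * (n : ℝ) ^ ((25 : ℝ)/3) * (n : ℝ) ^ ((2 : ℝ)/3) := by
        rw [← Real.rpow_natCast (n : ℝ) 18, ← Real.rpow_add hnR0, ← Real.rpow_add hnR0]
        norm_num
      have rx5 : x ^ (5 : ℕ) = (n : ℝ) ^ ((25 : ℝ)/3) := by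
        rw [hxdef, ← Real.rpow_natCast ((n : ℝ) ^ ((5 : ℝ)/3)) 5,
          ← Real.rpow_mul (le_of_lt hnR0)]
        norm_num
      have hM5 : (M : ℝ) ^ 5 ≤ 32 * (n : ℝ) ^ ((25 : ℝ)/3) := by
        calc (M : ℝ) ^ 5 ≤ (2 * x) ^ 5 := by
              apply pow_le_pow_left₀ (by positivity) hM2x
        _ = 32 * x ^ 5 := by ring
        _ = 32 * (n : ℝ) ^ ((25 : ℝ)/3) := by rw [rx5]
      have hc : 64 * (K : ℝ) * 96 ^ 6 ≤ (n : ℝ) ^ ((2 : ℝ)/3) := by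
        have hE3 : ((E : ℝ)) ^ (3 : ℕ) ≤ (n : ℝ) := by exact_mod_cast hnE
        have hE1 : (1 : ℝ) ≤ (E : ℝ) := by exact_mod_cast le_trans (by norm_num) hE96
        have s1 : (((E : ℝ)) ^ (3 : ℕ)) ^ ((2 : ℝ)/3) ≤ (n : ℝ) ^ ((2 : ℝ)/3) :=
          Real.rpow_le_rpow (by positivity) hE3 (by norm_num)
        have s2 : (((E : ℝ)) ^ (3 : ℕ)) ^ ((2 : ℝ)/3) = (E : ℝ) ^ ((2 : ℝ)) := by
          rw [← Real.rpow_natCast (E : ℝ) 3, ← Real.rpow_mul (by positivity)]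
          norm_num
        have s3 : (E : ℝ) ≤ (E : ℝ) ^ ((2 : ℝ)) := by
          calc (E : ℝ) = (E : ℝ) ^ ((1 : ℝ)) := (Real.rpow_one _).symm
          _ ≤ (E : ℝ) ^ ((2 : ℝ)) := Real.rpow_le_rpow_of_exponent_le hE1 (by norm_num)
        have s4 : 64 * (K : ℝ) * 96 ^ 6 = (E : ℝ) := by rw [hEdef]; push_cast; ring
        rw [s4]
        calc (E : ℝ) ≤ (E : ℝ) ^ ((2 : ℝ)) := s3
        _ = (((E : ℝ)) ^ (3 : ℕ)) ^ ((2 : ℝ)/3) := s2.symm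
        _ ≤ (n : ℝ) ^ ((2 : ℝ)/3) := s1
      have hQ6 : ((n : ℝ) ^ 3 / 96) ^ 6 ≤ (((N3 - 5 : ℕ)) : ℝ) ^ 6 := by
        apply pow_le_pow_left₀ (by positivity) hQR
      have e18 : ((n : ℝ) ^ 3 / 96) ^ 6 = ((n : ℝ)) ^ (18 : ℕ) / 96 ^ 6 := by ring
      have step : 2 * (K : ℝ) * ((n : ℝ)) ^ (9 : ℕ) * (M : ℝ) ^ 5
          ≤ ((n : ℝ)) ^ (18 : ℕ) / 96 ^ 6 := by
        rw [r9, r18]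
        calc 2 * (K : ℝ) * (n : ℝ) ^ ((9 : ℝ)) * (M : ℝ) ^ 5
            ≤ 2 * (K : ℝ) * (n : ℝ) ^ ((9 : ℝ)) * (32 * (n : ℝ) ^ ((25 : ℝ)/3)) := by
              apply mul_le_mul_of_nonneg_left hM5 (by positivity)
        _ = (n : ℝ) ^ ((9 : ℝ)) * (n : ℝ) ^ ((25 : ℝ)/3) * (64 * (K : ℝ) * 96 ^ 6) / 96 ^ 6 := by
              ring
        _ ≤ (n : ℝ) ^ ((9 : ℝ)) * (n : ℝ) ^ ((25 : ℝ)/3) * ((n : ℝ) ^ ((2 : ℝ)/3)) / 96 ^ 6 := by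
              gcongr
        _ = (n : ℝ) ^ ((9 : ℝ)) * (n : ℝ) ^ ((25 : ℝ)/3) * (n : ℝ) ^ ((2 : ℝ)/3) / 96 ^ 6 := by
              ring
      calc 2 * ((n : ℝ) ^ 9 * (K : ℝ)) * (M : ℝ) ^ 6
          = (2 * (K : ℝ) * ((n : ℝ)) ^ (9 : ℕ) * (M : ℝ) ^ 5) * (M : ℝ) := by ring
      _ ≤ (((n : ℝ)) ^ (18 : ℕ) / 96 ^ 6) * (M : ℝ) := by
          apply mul_le_mul_of_nonneg_right step (by positivity)
      _ = (M : ℝ) * (((n : ℝ)) ^ 3 / 96) ^ 6 := by rw [e18]; ring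
      _ ≤ (M : ℝ) * (((N3 - 5 : ℕ)) : ℝ) ^ 6 := by
          apply mul_le_mul_of_nonneg_left hQ6 (by positivity)
    calc 2 * BadAll.card * Nat.descFactorial M 6
        ≤ 2 * (n ^ 9 * K) * M ^ 6 := by
          apply Nat.mul_le_mul _ b2
          apply Nat.mul_le_mul_left
          exact le_trans hBadcard (Nat.mul_le_mul_right K b4)
      _ ≤ M * (N3 - 5) ^ 6 := main
      _ ≤ M * Nat.descFactorial N3 6 := Nat.mul_le_mul_left M b3
  have qpos : 0 < Nat.descFactorial N3 6 :=
    lt_of_lt_of_le (Nat.pow_pos (by omega) : 0 < (N3 - 5) ^ 6) b3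
  have key2 : 2 * (BadAll.card * Nat.choose (N3 - 6) (M - 6)) ≤ M * Nat.choose N3 M := by
    have idid := descFactorial_mul_choose_eq 6 M N3 hM6 hMN3
    apply Nat.le_of_mul_le_mul_left _ qpos
    calc Nat.descFactorial N3 6 * (2 * (BadAll.card * Nat.choose (N3 - 6) (M - 6)))
        = 2 * BadAll.card * (Nat.descFactorial N3 6 * Nat.choose (N3 - 6) (M - 6)) := by ring
      _ = 2 * BadAll.card * (Nat.descFactorial M 6 * Nat.choose N3 M) := by rw [← idid]
      _ = (2 * BadAll.card * Nat.descFactorial M 6) * Nat.choose N3 M := by ring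
      _ ≤ (M * Nat.descFactorial N3 6) * Nat.choose N3 M :=
          Nat.mul_le_mul_right _ star
      _ = Nat.descFactorial N3 6 * (M * Nat.choose N3 M) := by ring
  have hEx : ∃ H ∈ P, 2 * (BadAll.filter (fun S => S ⊆ H)).card ≤ M := by
    apply Finset.exists_le_of_sum_le hPne
    calc ∑ H ∈ P, 2 * (BadAll.filter (fun S => S ⊆ H)).card
        = 2 * ∑ H ∈ P, (BadAll.filter (fun S => S ⊆ H)).card := by rw [Finset.mul_sum]
      _ ≤ 2 * (BadAll.card * Nat.choose (N3 - 6) (M - 6)) := by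
          exact Nat.mul_le_mul_left 2 hsum
      _ ≤ M * Nat.choose N3 M := key2
      _ = M * P.card := by rw [hPcard]
      _ = ∑ _H ∈ P, M := by rw [Finset.sum_const, smul_eq_mul, mul_comm]
  obtain ⟨H, hHP, hHbad⟩ := hEx
  have hHT : H ⊆ T := by
    rw [hPdef, mem_powersetCard] at hHP; exact hHP.1
  have hHM : H.card = M := by
    rw [hPdef, mem_powersetCard] at hHP; exact hHP.2
  set Bad := BadAll.filter (fun S => S ⊆ H) with hBaddef
  set pick : Finset (Finset (Fin n)) → Finset (Fin n) :=
    fun S => if h : S.Nonempty then h.choose else ∅ with hpickdef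
  have hpick : ∀ S : Finset (Finset (Fin n)), S.Nonempty → pick S ∈ S := by
    intro S h
    rw [hpickdef]
    simp only [dif_pos h]
    exact h.choose_spec
  have hBadne : ∀ S ∈ Bad, S.Nonempty := by
    intro S hS
    rw [hBaddef, mem_filter, hBadAlldef, mem_filter, mem_powersetCard] at hS
    exact Finset.card_pos.mp (by omega)
  set R := Bad.image pick with hRdef
  have hRH : R ⊆ H := by
    intro A hA
    rw [hRdef, mem_image] at hA
    obtain ⟨S, hS, rfl⟩ := hA
    have hmem := hpick S (hBadne S hS)
    rw [hBaddef, mem_filter] at hS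
    exact hS.2 hmem
  set H' := H \ R with hH'def
  have hH'H : H' ⊆ H := sdiff_subset
  have hunif : ∀ A ∈ H', A.card = 3 := by
    intro A hA
    have h := hHT (hH'H hA)
    rw [hTdef, mem_powersetCard] at h
    exact h.2
  have hgfree : GFree H' 9 6 := by
    intro S hS hS6
    by_contra hcon
    push_neg at hcon
    have hSBadAll : S ∈ BadAll := by
      rw [hBadAlldef, mem_filter, mem_powersetCard]
      exact ⟨⟨fun A hA => hHT (hH'H (hS hA)), hS6⟩, by omega⟩
    have hSBad : S ∈ Bad := by
      rw [hBaddef, mem_filter]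
      exact ⟨hSBadAll, fun A hA => hH'H (hS hA)⟩
    have hSne : S.Nonempty := Finset.card_pos.mp (by omega)
    have h1 : pick S ∈ R := by rw [hRdef]; exact mem_image_of_mem pick hSBad
    have h2 : pick S ∈ H' := hS (hpick S hSne)
    rw [hH'def, mem_sdiff] at h2
    exact h2.2 h1
  have hcard' : M - Bad.card ≤ H'.card := by
    rw [hH'def, card_sdiff_of_subset hRH, hHM]
    exact Nat.sub_le_sub_left card_image_le M
  have hext : H'.card ≤ extremalF 3 n 9 6 := by
    apply le_csSup
    · refine ⟨Fintype.card (Finset (Fin n)), ?_⟩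
      rintro m ⟨G, -, -, rfl⟩
      exact Finset.card_le_univ G
    · exact ⟨H', hunif, hgfree, rfl⟩
  have hbadM : (Bad.card : ℝ) ≤ (M : ℝ) / 2 := by
    have h1 : 2 * Bad.card ≤ M := hHbad
    have h2 := (Nat.cast_le (α := ℝ)).mpr h1
    push_cast at h2
    linarith
  have hfin : x / 2 ≤ (H'.card : ℝ) := by
    have hBM : Bad.card ≤ M := by omega
    have hcast : ((M - Bad.card : ℕ) : ℝ) = (M : ℝ) - (Bad.card : ℝ) := by
      rw [Nat.cast_sub hBM]
    have h2 := (Nat.cast_le (α := ℝ)).mpr hcard'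
    rw [hcast] at h2
    linarith [hMx]
  calc (1 / 2 : ℝ) * (n : ℝ) ^ ((5 : ℝ) / 3) = x / 2 := by rw [hxdef]; ring
  _ ≤ (H'.card : ℝ) := hfin
  _ ≤ (extremalF 3 n 9 6 : ℝ) := by exact_mod_cast hext
end

section
/- Let r ≥ 2, e ≥ 2, n ≥ 1 and v be integers, and suppose er − v = p(e−1) + q where p and q are integers with p ≥ 1, 1 ≤ q ≤ e−1, and p+1 ≤ r. Then f_r(n, v, e) ≤ q·binom(n, p+1)/binom(r, p+1) + (e−1−q)·binom(n, p)/binom(r, p), where the inequality is between real numbers. -/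
open Finset

lemma exists_coloring {n : ℕ} (r e v p q : ℕ) (he : 2 ≤ e)
    (hv : r + (q * (r - (p + 1)) + (e - 1 - q) * (r - p)) ≤ v) :
    ∀ H : Finset (Finset (Fin n)), (∀ A ∈ H, A.card = r) → GFree H v e →
    ∃ c : Finset (Fin n) → ℕ, (∀ A ∈ H, c A < e - 1) ∧
      ∀ A ∈ H, ∀ B ∈ H, A ≠ B → c A = c B →
        (A ∩ B).card < (if c A < q then p + 1 else p) := by
  intro H
  induction H using Finset.induction_on with
  | empty => exact fun _ _ => ⟨fun _ => 0, by simp, by simp⟩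
  | @insert A s hA ih =>
    intro hunif hfree
    obtain ⟨c, hc1, hc2⟩ := ih (fun B hB => hunif B (mem_insert_of_mem hB))
      (fun S hS hSc => hfree S (hS.trans (subset_insert A s)) hSc)
    by_cases hex : ∃ i < e - 1, ∀ B ∈ s, c B = i →
        (A ∩ B).card < (if i < q then p + 1 else p)
    · obtain ⟨i, hi, hgood⟩ := hex
      refine ⟨Function.update c A i, ?_, ?_⟩
      · intro A' hA'
        rcases mem_insert.mp hA' with rfl | h
        · simpa using hi
        · rw [Function.update_of_ne (by rintro rfl; exact hA h)]
          exact hc1 _ h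
      · intro A' hA' B hB hne hcc
        rcases mem_insert.mp hA' with rfl | hA's
        · rcases mem_insert.mp hB with rfl | hBs
          · exact absurd rfl hne
          · rw [Function.update_self] at hcc ⊢
            rw [Function.update_of_ne (by rintro rfl; exact hA hBs)] at hcc
            exact hgood B hBs hcc.symm
        · have hA'A : A' ≠ A := by rintro rfl; exact hA hA's
          rw [Function.update_of_ne hA'A] at hcc ⊢
          rcases mem_insert.mp hB with rfl | hBs
          · rw [Function.update_self] at hcc
            have h := hgood A' hA's hcc
            rw [hcc, inter_comm]
            exact h
          · rw [Function.update_of_ne (by rintro rfl; exact hA hBs)] at hcc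
            exact hc2 A' hA's B hBs hne hcc
    · push_neg at hex
      choose B hBs hBc hBi using hex
      set T : Finset (Finset (Fin n)) :=
        (range (e - 1)).attach.image (fun x => B x.1 (mem_range.mp x.2)) with hT
      have hTs : T ⊆ s := by
        intro C hC
        rw [hT, mem_image] at hC
        obtain ⟨x, _, rfl⟩ := hC
        exact hBs _ _
      have hAT : A ∉ T := fun h => hA (hTs h)
      have hTcard : T.card = e - 1 := by
        rw [hT, Finset.card_image_of_injOn, Finset.card_attach, Finset.card_range]
        intro x _ y _ hxy
        have hxy' : B x.1 (mem_range.mp x.2) = B y.1 (mem_range.mp y.2) := hxy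
        have : x.1 = y.1 := by
          rw [← hBc x.1 (mem_range.mp x.2), ← hBc y.1 (mem_range.mp y.2), hxy']
        exact Subtype.ext this
      have hScard : (insert A T).card = e := by
        rw [Finset.card_insert_of_notMem hAT, hTcard]; omega
      have hSsub : insert A T ⊆ insert A s := Finset.insert_subset_insert A hTs
      have hbig := hfree (insert A T) hSsub hScard
      have hsmall : ((insert A T).biUnion id).card ≤ v := by
        have hsub : (insert A T).biUnion id ⊆
            A ∪ (range (e - 1)).attach.biUnion
              (fun x => B x.1 (mem_range.mp x.2) \ A) := by
          intro x hx
          rw [mem_biUnion] at hx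
          obtain ⟨C, hC, hxC⟩ := hx
          by_cases hxA : x ∈ A
          · exact mem_union_left _ hxA
          · rcases mem_insert.mp hC with rfl | hCT
            · exact absurd hxC hxA
            · rw [hT, mem_image] at hCT
              obtain ⟨y, hy, rfl⟩ := hCT
              exact mem_union_right _ (mem_biUnion.mpr
                ⟨y, hy, mem_sdiff.mpr ⟨hxC, hxA⟩⟩)
        calc ((insert A T).biUnion id).card
            ≤ (A ∪ (range (e - 1)).attach.biUnion
                (fun x => B x.1 (mem_range.mp x.2) \ A)).card :=
              Finset.card_le_card hsub
          _ ≤ A.card + ((range (e - 1)).attach.biUnion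
                (fun x => B x.1 (mem_range.mp x.2) \ A)).card :=
              Finset.card_union_le _ _
          _ ≤ A.card + ∑ x ∈ (range (e - 1)).attach,
                (B x.1 (mem_range.mp x.2) \ A).card :=
              Nat.add_le_add_left (Finset.card_biUnion_le) _
          _ ≤ r + ∑ x ∈ (range (e - 1)).attach,
                (r - (if x.1 < q then p + 1 else p)) := by
              refine Nat.add_le_add ?_ (Finset.sum_le_sum ?_)
              · exact (hunif A (mem_insert_self A s)).le
              · intro x _
                have hu : (B x.1 (mem_range.mp x.2)).card = r :=
                  hunif _ (mem_insert_of_mem (hBs _ _))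
                have hint := hBi x.1 (mem_range.mp x.2)
                have hic : (B x.1 (mem_range.mp x.2) ∩ A).card
                    + (B x.1 (mem_range.mp x.2) \ A).card
                    = (B x.1 (mem_range.mp x.2)).card :=
                  Finset.card_inter_add_card_sdiff _ _
                rw [inter_comm] at hic
                omega
          _ ≤ r + (q * (r - (p + 1)) + (e - 1 - q) * (r - p)) := by
              refine Nat.add_le_add_left ?_ _
              rw [Finset.sum_attach (range (e - 1))
                (fun i => r - (if i < q then p + 1 else p))]
              have heq : ∑ i ∈ range (e - 1), (r - (if i < q then p + 1 else p))
                  = ∑ i ∈ range (e - 1),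
                    (if i < q then r - (p + 1) else r - p) :=
                Finset.sum_congr rfl (fun i _ => by split_ifs <;> rfl)
              rw [heq, Finset.sum_ite, Finset.sum_const, Finset.sum_const]
              have hf1 : ((range (e - 1)).filter (fun i => i < q)).card ≤ q := by
                have : ((range (e - 1)).filter (fun i => i < q)) ⊆ range q := by
                  intro i hi
                  rw [mem_filter] at hi
                  exact mem_range.mpr hi.2
                simpa using Finset.card_le_card this
              have hf2 : ((range (e - 1)).filter (fun i => ¬ i < q)).card ≤ e - 1 - q := by
                have : ((range (e - 1)).filter (fun i => ¬ i < q)) ⊆ Ico q (e - 1) := by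
                  intro i hi
                  rw [mem_filter, mem_range] at hi
                  rw [mem_Ico]
                  omega
                simpa using Finset.card_le_card this
              simp only [smul_eq_mul]
              exact Nat.add_le_add (Nat.mul_le_mul_right _ hf1)
                (Nat.mul_le_mul_right _ hf2)
          _ ≤ v := hv
      omega
  
lemma class_bound {n r s : ℕ} (C : Finset (Finset (Fin n)))
    (hunif : ∀ A ∈ C, A.card = r)
    (hint : ∀ A ∈ C, ∀ B ∈ C, A ≠ B → (A ∩ B).card < s) :
    C.card * r.choose s ≤ n.choose s := by
  have hdisj : ∀ A ∈ C, ∀ B ∈ C, A ≠ B →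
      Disjoint (A.powersetCard s) (B.powersetCard s) := by
    intro A hA B hB hne
    rw [Finset.disjoint_left]
    intro U hU hU'
    rw [Finset.mem_powersetCard] at hU hU'
    have hsub : U ⊆ A ∩ B := Finset.subset_inter hU.1 hU'.1
    have := Finset.card_le_card hsub
    have := hint A hA B hB hne
    omega
  have key : (C.biUnion (fun A => A.powersetCard s)).card
      = ∑ A ∈ C, (A.powersetCard s).card := Finset.card_biUnion hdisj
  have hsum : ∑ A ∈ C, (A.powersetCard s).card = C.card * r.choose s := by
    rw [Finset.sum_congr rfl (fun A hA => by
      rw [Finset.card_powersetCard, hunif A hA])]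
    rw [Finset.sum_const, smul_eq_mul]
  have hsub : C.biUnion (fun A => A.powersetCard s)
      ⊆ (Finset.univ : Finset (Fin n)).powersetCard s := by
    intro U hU
    rw [Finset.mem_biUnion] at hU
    obtain ⟨A, _, hUA⟩ := hU
    rw [Finset.mem_powersetCard] at hUA ⊢
    exact ⟨Finset.subset_univ _, hUA.2⟩
  have := Finset.card_le_card hsub
  rw [key, hsum] at this
  simpa using this

theorem general_upper_bound (r e n v p q : ℕ) (hr : 2 ≤ r) (he : 2 ≤ e) (hn : 1 ≤ n)
    (hp : 1 ≤ p) (hq1 : 1 ≤ q) (hq2 : q ≤ e - 1) (hpr : p + 1 ≤ r)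
    (hsum : e * r = v + p * (e - 1) + q) :
    (extremalF r n v e : ℝ) ≤
      (q : ℝ) * (n.choose (p + 1) : ℝ) / (r.choose (p + 1) : ℝ) +
        ((e - 1 - q : ℕ) : ℝ) * (n.choose p : ℝ) / (r.choose p : ℝ) := by
  have hrp : p ≤ r := by omega
  have hv : r + (q * (r - (p + 1)) + (e - 1 - q) * (r - p)) ≤ v := by
    obtain ⟨a, rfl⟩ : ∃ a, r = p + 1 + a := ⟨r - (p + 1), by omega⟩
    obtain ⟨m, rfl⟩ : ∃ m, e = q + m + 1 := ⟨e - 1 - q, by omega⟩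
    have h1 : p + 1 + a - (p + 1) = a := by omega
    have h2 : p + 1 + a - p = a + 1 := by omega
    have h3 : q + m + 1 - 1 - q = m := by omega
    have h4 : q + m + 1 - 1 = q + m := by omega
    rw [h1, h2, h3]
    rw [h4] at hsum
    nlinarith [hsum]
  have hne : {m : ℕ | ∃ H : Finset (Finset (Fin n)),
      (∀ A ∈ H, A.card = r) ∧ GFree H v e ∧ H.card = m}.Nonempty := by
    refine ⟨0, ∅, by simp, ?_, by simp⟩
    intro S hS hSc
    rw [Finset.subset_empty] at hS
    subst hS
    simp at hSc
    omega
  have hbdd : BddAbove {m : ℕ | ∃ H : Finset (Finset (Fin n)),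
      (∀ A ∈ H, A.card = r) ∧ GFree H v e ∧ H.card = m} := by
    refine ⟨Fintype.card (Finset (Fin n)), ?_⟩
    rintro m ⟨H, _, _, rfl⟩
    exact Finset.card_le_univ H
  obtain ⟨H, hunif, hfree, hcard⟩ := Nat.sSup_mem hne hbdd
  have hE : extremalF r n v e = H.card := hcard.symm
  rw [hE]
  obtain ⟨c, hc1, hc2⟩ := exists_coloring r e v p q he hv H hunif hfree
  have hfib : H.card = ∑ i ∈ range (e - 1), (H.filter (fun A => c A = i)).card :=
    Finset.card_eq_sum_card_fiberwise (fun A hA => mem_range.mpr (hc1 A hA))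
  have hcp1 : (0 : ℝ) < r.choose (p + 1) := by
    exact_mod_cast Nat.choose_pos hpr
  have hcp : (0 : ℝ) < r.choose p := by
    exact_mod_cast Nat.choose_pos hrp
  have hclass : ∀ i, ((H.filter (fun A => c A = i)).card : ℝ)
      ≤ if i < q then (n.choose (p + 1) : ℝ) / (r.choose (p + 1) : ℝ)
        else (n.choose p : ℝ) / (r.choose p : ℝ) := by
    intro i
    have hb := class_bound (r := r) (s := if i < q then p + 1 else p)
      (H.filter (fun A => c A = i))
      (fun A hA => hunif A (mem_filter.mp hA).1)
      (by
        intro A hA B hB hne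
        rw [mem_filter] at hA hB
        have h := hc2 A hA.1 B hB.1 hne (hA.2.trans hB.2.symm)
        rwa [hA.2] at h)
    split_ifs with h
    · rw [if_pos h] at hb
      rw [le_div_iff₀ hcp1]
      exact_mod_cast hb
    · rw [if_neg h] at hb
      rw [le_div_iff₀ hcp]
      exact_mod_cast hb
  calc (H.card : ℝ)
      = ∑ i ∈ range (e - 1), ((H.filter (fun A => c A = i)).card : ℝ) := by
        rw [hfib]; push_cast; ring
    _ ≤ ∑ i ∈ range (e - 1),
          (if i < q then (n.choose (p + 1) : ℝ) / (r.choose (p + 1) : ℝ)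
            else (n.choose p : ℝ) / (r.choose p : ℝ)) :=
        Finset.sum_le_sum (fun i _ => hclass i)
    _ = (q : ℝ) * ((n.choose (p + 1) : ℝ) / (r.choose (p + 1) : ℝ))
          + ((e - 1 - q : ℕ) : ℝ) * ((n.choose p : ℝ) / (r.choose p : ℝ)) := by
        rw [Finset.sum_ite, Finset.sum_const, Finset.sum_const]
        have hf1 : ((range (e - 1)).filter (fun i => i < q)) = range q := by
          ext i
          simp only [mem_filter, mem_range]
          omega
        have hf2 : ((range (e - 1)).filter (fun i => ¬ i < q)) = Ico q (e - 1) := by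
          ext i
          simp only [mem_filter, mem_range, mem_Ico]
          omega
        rw [hf1, hf2, Finset.card_range, Nat.card_Ico]
        simp only [nsmul_eq_mul]
    _ = (q : ℝ) * (n.choose (p + 1) : ℝ) / (r.choose (p + 1) : ℝ)
          + ((e - 1 - q : ℕ) : ℝ) * (n.choose p : ℝ) / (r.choose p : ℝ) := by
        rw [mul_div_assoc, mul_div_assoc]
end

section
/- (Additive law) Let r ≥ 2, e ≥ 2, n ≥ 1 and v be integers and let l be an integer with 1 ≤ l ≤ r. Then f_r(n, v, e) ≤ f_r(n, v − r + l, e − 1) + binom(n, l)/binom(r, l), where the inequality is between real numbers. -/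
open Finset

lemma extremalF_bdd (r n v e : ℕ) : BddAbove {m : ℕ | ∃ H : Finset (Finset (Fin n)),
    (∀ A ∈ H, A.card = r) ∧ GFree H v e ∧ H.card = m} := by
  refine ⟨Fintype.card (Finset (Fin n)), ?_⟩
  rintro m ⟨H, -, -, rfl⟩
  exact Finset.card_le_univ H

lemma le_extremalF {r n v e : ℕ} (H : Finset (Finset (Fin n)))
    (h1 : ∀ A ∈ H, A.card = r) (h2 : GFree H v e) : H.card ≤ extremalF r n v e :=
  le_csSup (extremalF_bdd r n v e) ⟨H, h1, h2, rfl⟩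

lemma extremalF_attained (r n v e : ℕ) (he : 1 ≤ e) : ∃ H : Finset (Finset (Fin n)),
    (∀ A ∈ H, A.card = r) ∧ GFree H v e ∧ H.card = extremalF r n v e := by
  have hne : {m : ℕ | ∃ H : Finset (Finset (Fin n)),
      (∀ A ∈ H, A.card = r) ∧ GFree H v e ∧ H.card = m}.Nonempty := by
    refine ⟨0, ∅, by simp, ?_, by simp⟩
    intro S hS hc
    rw [Finset.subset_empty] at hS
    subst hS
    simp at hc
    omega
  exact Nat.sSup_mem hne (extremalF_bdd r n v e)

theorem additive_law (r e n v l : ℕ) (hr : 2 ≤ r) (he : 2 ≤ e) (hn : 1 ≤ n)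
    (hl1 : 1 ≤ l) (hl2 : l ≤ r) :
    (extremalF r n v e : ℝ) ≤ (extremalF r n (v + l - r) (e - 1) : ℝ) +
      (n.choose l : ℝ) / (r.choose l : ℝ) := by
  classical
  obtain ⟨H, hunif, hfree, hHcard⟩ := extremalF_attained r n v e (by omega)
  rw [← hHcard]
  -- maximal packing H₁
  set P := H.powerset.filter
    (fun S => ∀ A ∈ S, ∀ B ∈ S, A ≠ B → (A ∩ B).card < l) with hPdef
  have hPne : P.Nonempty := ⟨∅, by simp [hPdef]⟩
  obtain ⟨H₁, hH₁P, hmaxcard⟩ := P.exists_max_image (fun S => S.card) hPne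
  rw [hPdef, Finset.mem_filter, Finset.mem_powerset] at hH₁P
  obtain ⟨hH₁sub, hpack⟩ := hH₁P
  -- maximality: any edge outside H₁ meets some edge of H₁ in ≥ l vertices
  have hmax : ∀ B ∈ H, B ∉ H₁ → ∃ A ∈ H₁, l ≤ (A ∩ B).card := by
    intro B hBH hBnot
    by_contra hcon
    push_neg at hcon
    have hins : insert B H₁ ∈ P := by
      rw [hPdef, Finset.mem_filter, Finset.mem_powerset]
      constructor
      · exact Finset.insert_subset hBH hH₁sub
      · intro A hA C hC hAC
        rcases Finset.mem_insert.mp hA with hA' | hA'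
        · rcases Finset.mem_insert.mp hC with hC' | hC'
          · exact absurd (hA'.trans hC'.symm) hAC
          · subst hA'; rw [Finset.inter_comm]; exact hcon C hC'
        · rcases Finset.mem_insert.mp hC with hC' | hC'
          · subst hC'; exact hcon A hA'
          · exact hpack A hA' C hC' hAC
    have := hmaxcard _ hins
    rw [Finset.card_insert_of_notMem hBnot] at this
    omega
  -- the packing bound
  have hchoosepos : 0 < r.choose l := Nat.choose_pos hl2
  have hpackbound : H₁.card * r.choose l ≤ n.choose l := by
    have hdisj : ∀ A ∈ H₁, ∀ B ∈ H₁, A ≠ B →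
        Disjoint (Finset.powersetCard l A) (Finset.powersetCard l B) := by
      intro A hA B hB hAB
      rw [Finset.disjoint_left]
      intro s hsA hsB
      rw [Finset.mem_powersetCard] at hsA hsB
      have hsub : s ⊆ A ∩ B := Finset.subset_inter hsA.1 hsB.1
      have := Finset.card_le_card hsub
      have := hpack A hA B hB hAB
      omega
    have hcardUnion : (H₁.biUnion (fun A => Finset.powersetCard l A)).card
        = H₁.card * r.choose l := by
      rw [Finset.card_biUnion hdisj]
      rw [Finset.sum_congr rfl (fun A hA => by
        rw [Finset.card_powersetCard, hunif A (hH₁sub hA)])]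
      simp [Finset.sum_const, mul_comm]
    have hsub2 : H₁.biUnion (fun A => Finset.powersetCard l A)
        ⊆ Finset.powersetCard l (Finset.univ : Finset (Fin n)) := by
      intro s hs
      rw [Finset.mem_biUnion] at hs
      obtain ⟨A, -, hsA⟩ := hs
      rw [Finset.mem_powersetCard] at hsA ⊢
      exact ⟨Finset.subset_univ s, hsA.2⟩
    have := Finset.card_le_card hsub2
    rw [hcardUnion, Finset.card_powersetCard, Finset.card_univ, Fintype.card_fin] at this
    exact this
  -- H₂ = H \ H₁ is GFree (v+l-r) (e-1)
  set H₂ := H \ H₁ with hH₂def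
  have hH₂free : GFree H₂ (v + l - r) (e - 1) := by
    intro S hSsub hScard
    by_contra hlt
    push_neg at hlt
    have hlt' : (S.biUnion id).card ≤ v + l - r := by omega
    have hSne : S.Nonempty := Finset.card_pos.mp (by omega)
    obtain ⟨B, hBS⟩ := hSne
    have hBH₂ : B ∈ H₂ := hSsub hBS
    have hBH : B ∈ H := (Finset.sdiff_subset) hBH₂
    have hBsub : B ⊆ S.biUnion id := Finset.subset_biUnion_of_mem id hBS
    have hBr : B.card = r := hunif B hBH
    by_cases hdeg : v + l - r = 0
    · have h1 : 1 ≤ (S.biUnion id).card :=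
        le_trans (by omega) (le_trans hBr.ge (Finset.card_le_card hBsub))
      omega
    · have hBnot : B ∉ H₁ := (Finset.mem_sdiff.mp hBH₂).2
      obtain ⟨A, hAH₁, hAB⟩ := hmax B hBH hBnot
      have hAnotS : A ∉ S := by
        intro hAS
        exact (Finset.mem_sdiff.mp (hSsub hAS)).2 hAH₁
      have hTsub : insert A S ⊆ H :=
        Finset.insert_subset (hH₁sub hAH₁) (hSsub.trans Finset.sdiff_subset)
      have hTcard : (insert A S).card = e := by
        rw [Finset.card_insert_of_notMem hAnotS]; omega
      have hv1 := hfree _ hTsub hTcard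
      rw [Finset.biUnion_insert] at hv1
      have hsubst : (id A : Finset (Fin n)) ∪ S.biUnion id
          ⊆ (A \ B) ∪ S.biUnion id := by
        intro x hx
        rcases Finset.mem_union.mp hx with hxA | hxU
        · by_cases hxB : x ∈ S.biUnion id
          · exact Finset.mem_union_right _ hxB
          · exact Finset.mem_union_left _ (Finset.mem_sdiff.mpr ⟨hxA,
              fun hxB' => hxB (hBsub hxB')⟩)
        · exact Finset.mem_union_right _ hxU
      have hAsdiff : (A \ B).card ≤ r - l := by
        have h1 := Finset.card_inter_add_card_sdiff A B
        have hAr : A.card = r := hunif A (hH₁sub hAH₁)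
        omega
      have hbound : ((id A : Finset (Fin n)) ∪ S.biUnion id).card ≤ v := by
        calc ((id A : Finset (Fin n)) ∪ S.biUnion id).card
            ≤ ((A \ B) ∪ S.biUnion id).card := Finset.card_le_card hsubst
          _ ≤ (A \ B).card + (S.biUnion id).card := Finset.card_union_le _ _
          _ ≤ (r - l) + (v + l - r) := by omega
          _ ≤ v := by omega
      omega
  have hH₂le : H₂.card ≤ extremalF r n (v + l - r) (e - 1) :=
    le_extremalF H₂ (fun A hA => hunif A (Finset.sdiff_subset hA)) hH₂free
  -- combine
  have hsplit : H.card = H₂.card + H₁.card :=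
    (Finset.card_sdiff_add_card_eq_card hH₁sub).symm
  have hH₁real : (H₁.card : ℝ) ≤ (n.choose l : ℝ) / (r.choose l : ℝ) := by
    rw [le_div_iff₀ (by exact_mod_cast hchoosepos)]
    exact_mod_cast hpackbound
  have hH₂real : (H₂.card : ℝ) ≤ (extremalF r n (v + l - r) (e - 1) : ℝ) := by
    exact_mod_cast hH₂le
  have : (H.card : ℝ) = (H₂.card : ℝ) + (H₁.card : ℝ) := by exact_mod_cast hsplit
  rw [this]
  exact add_le_add hH₂real hH₁real
end

section
/- Let r ≥ 3 and let H be an r-uniform r-partite linear hypergraph. Then H is G_r(3r−3, 3)-free if and only if H contains no rainbow 3-cycles. -/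
open Finset

/-- `H` (an `r`-uniform `r`-partite hypergraph with parts given by `part`) contains a rainbow
cycle of length `k`: `k` distinct vertices and `k` distinct edges, with `vᵢ, vᵢ₊₁ ∈ Aᵢ`
(cyclically), and the `k` vertices lying in `k` distinct vertex parts. -/
def HasRainbowCycle {V : Type*} {r : ℕ} (H : Finset (Finset V)) (part : V → Fin r)
    (k : ℕ) : Prop :=
  ∃ (v : Fin k → V) (A : Fin k → Finset V),
    Function.Injective v ∧ Function.Injective A ∧
    (∀ i, A i ∈ H) ∧
    (∀ i : Fin k, v i ∈ A i ∧ v (finRotate k i) ∈ A i) ∧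
    Function.Injective (fun i => part (v i))

lemma inj3 {α : Type*} {f : Fin 3 → α} (h01 : f 0 ≠ f 1) (h02 : f 0 ≠ f 2)
    (h12 : f 1 ≠ f 2) : Function.Injective f := by
  intro i j h
  fin_cases i <;> fin_cases j <;> simp_all

lemma tripleCard {V : Type*} [DecidableEq V] (A B C : Finset V) :
    (A ∪ B ∪ C).card + (A ∩ B).card + ((A ∪ B) ∩ C).card = A.card + B.card + C.card := by
  have h1 := Finset.card_union_add_card_inter A B
  have h2 := Finset.card_union_add_card_inter (A ∪ B) C
  omega

theorem gfree_iff_no_rainbow_3cycle {V : Type*} [DecidableEq V] (r : ℕ) (hr : 3 ≤ r)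
    (H : Finset (Finset V)) (part : V → Fin r)
    (hpart : ∀ A ∈ H, ∀ i : Fin r, (A.filter fun x => part x = i).card = 1)
    (hlin : ∀ A ∈ H, ∀ B ∈ H, A ≠ B → (A ∩ B).card ≤ 1) :
    GFree H (3 * r - 3) 3 ↔ ¬ HasRainbowCycle H part 3 := by
  have hcard : ∀ A ∈ H, A.card = r := by
    intro A hA
    rw [Finset.card_eq_sum_card_fiberwise (f := part) (t := Finset.univ)
      (fun x _ => Finset.mem_univ _)]
    simp [hpart A hA]
  have hpinj : ∀ A ∈ H, ∀ x ∈ A, ∀ y ∈ A, part x = part y → x = y := by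
    intro A hA x hx y hy hxy
    have h1 := hpart A hA (part y)
    have hx' : x ∈ A.filter fun z => part z = part y := by simp [hx, hxy]
    have hy' : y ∈ A.filter fun z => part z = part y := by simp [hy]
    exact Finset.card_le_one.mp h1.le x hx' y hy'
  constructor
  · rintro hG ⟨v, A, hvinj, hAinj, hAH, hcyc, -⟩
    have hrot0 : finRotate 3 0 = 1 := by decide
    have hrot1 : finRotate 3 1 = 2 := by decide
    have hrot2 : finRotate 3 2 = 0 := by decide
    obtain ⟨h00, h10⟩ := hcyc 0
    obtain ⟨h11, h21⟩ := hcyc 1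
    obtain ⟨h22, h02⟩ := hcyc 2
    rw [hrot0] at h10; rw [hrot1] at h21; rw [hrot2] at h02
    have hA01 : A 0 ≠ A 1 := hAinj.ne (by decide)
    have hA02 : A 0 ≠ A 2 := hAinj.ne (by decide)
    have hA12 : A 1 ≠ A 2 := hAinj.ne (by decide)
    set S : Finset (Finset V) := {A 0, A 1, A 2} with hSdef
    have hSsub : S ⊆ H := by
      intro X hX
      simp only [hSdef, Finset.mem_insert, Finset.mem_singleton] at hX
      rcases hX with rfl | rfl | rfl <;> exact hAH _
    have hS3 : S.card = 3 := Finset.card_eq_three.mpr ⟨A 0, A 1, A 2, hA01, hA02, hA12, rfl⟩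
    have key := hG S hSsub hS3
    have hU : S.biUnion id = A 0 ∪ A 1 ∪ A 2 := by
      simp [hSdef, Finset.biUnion_insert, Finset.union_assoc]
    rw [hU] at key
    have htri := tripleCard (A 0) (A 1) (A 2)
    have hi1 : 1 ≤ (A 0 ∩ A 1).card :=
      Finset.card_pos.mpr ⟨v 1, Finset.mem_inter.mpr ⟨h10, h11⟩⟩
    have hi2 : 2 ≤ ((A 0 ∪ A 1) ∩ A 2).card := by
      have hsub : ({v 0, v 2} : Finset V) ⊆ (A 0 ∪ A 1) ∩ A 2 := by
        intro x hx
        simp only [Finset.mem_insert, Finset.mem_singleton] at hx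
        rcases hx with rfl | rfl
        · exact Finset.mem_inter.mpr ⟨Finset.mem_union_left _ h00, h02⟩
        · exact Finset.mem_inter.mpr ⟨Finset.mem_union_right _ h21, h22⟩
      calc 2 = ({v 0, v 2} : Finset V).card := (Finset.card_pair (hvinj.ne (by decide))).symm
        _ ≤ _ := Finset.card_le_card hsub
    have hc0 := hcard _ (hAH 0)
    have hc1 := hcard _ (hAH 1)
    have hc2 := hcard _ (hAH 2)
    omega
  · intro hnc
    intro S hS hS3
    by_contra hlt
    push_neg at hlt
    obtain ⟨A, B, C, hAB, hAC, hBC, rfl⟩ := Finset.card_eq_three.mp hS3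
    have hA : A ∈ H := hS (by simp)
    have hB : B ∈ H := hS (by simp)
    have hC : C ∈ H := hS (by simp)
    have hU : ({A, B, C} : Finset (Finset V)).biUnion id = A ∪ B ∪ C := by
      simp [Finset.biUnion_insert, Finset.union_assoc]
    rw [hU] at hlt
    have htri := tripleCard A B C
    have hlAB := hlin A hA B hB hAB
    have hlAC := hlin A hA C hC hAC
    have hlBC := hlin B hB C hC hBC
    have hUdist : (A ∪ B) ∩ C = (A ∩ C) ∪ (B ∩ C) := Finset.union_inter_distrib_right A B C
    have hle2 : ((A ∪ B) ∩ C).card ≤ (A ∩ C).card + (B ∩ C).card := by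
      rw [hUdist]; exact Finset.card_union_le _ _
    have hcA := hcard A hA
    have hcB := hcard B hB
    have hcC := hcard C hC
    -- all intersections have card exactly 1
    have hAB1 : (A ∩ B).card = 1 := by omega
    have hAC1 : (A ∩ C).card = 1 := by omega
    have hBC1 : (B ∩ C).card = 1 := by omega
    have hUC2 : ((A ∪ B) ∩ C).card = 2 := by omega
    obtain ⟨v1, hv1⟩ := Finset.card_eq_one.mp hAB1
    obtain ⟨v0, hv0⟩ := Finset.card_eq_one.mp hAC1
    obtain ⟨v2, hv2⟩ := Finset.card_eq_one.mp hBC1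
    have hv1A : v1 ∈ A := (Finset.mem_inter.mp (hv1 ▸ Finset.mem_singleton_self v1)).1
    have hv1B : v1 ∈ B := (Finset.mem_inter.mp (hv1 ▸ Finset.mem_singleton_self v1)).2
    have hv0A : v0 ∈ A := (Finset.mem_inter.mp (hv0 ▸ Finset.mem_singleton_self v0)).1
    have hv0C : v0 ∈ C := (Finset.mem_inter.mp (hv0 ▸ Finset.mem_singleton_self v0)).2
    have hv2B : v2 ∈ B := (Finset.mem_inter.mp (hv2 ▸ Finset.mem_singleton_self v2)).1
    have hv2C : v2 ∈ C := (Finset.mem_inter.mp (hv2 ▸ Finset.mem_singleton_self v2)).2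
    have hv02 : v0 ≠ v2 := by
      rintro rfl
      rw [hUdist, hv0, hv2, Finset.union_self, Finset.card_singleton] at hUC2
      omega
    have hv10 : v1 ≠ v0 := by
      rintro rfl
      have : v1 ∈ B ∩ C := Finset.mem_inter.mpr ⟨hv1B, hv0C⟩
      rw [hv2, Finset.mem_singleton] at this
      exact hv02 this
    have hv12 : v1 ≠ v2 := by
      rintro rfl
      have : v1 ∈ A ∩ C := Finset.mem_inter.mpr ⟨hv1A, hv2C⟩
      rw [hv0, Finset.mem_singleton] at this
      exact hv02 this.symm
    have hp01 : part v0 ≠ part v1 := fun h => hv10 (hpinj A hA v0 hv0A v1 hv1A h).symm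
    have hp12 : part v1 ≠ part v2 := fun h => hv12 (hpinj B hB v1 hv1B v2 hv2B h)
    have hp02 : part v0 ≠ part v2 := fun h => hv02 (hpinj C hC v0 hv0C v2 hv2C h)
    apply hnc
    have hrot : ∀ i : Fin 3, finRotate 3 i = ![1, 2, 0] i := by decide
    refine ⟨![v0, v1, v2], ![A, B, C], ?_, ?_, ?_, ?_, ?_⟩
    · exact inj3 hv10.symm hv02 hv12
    · exact inj3 hAB hAC hBC
    · intro i
      fin_cases i
      · exact hA
      · exact hB
      · exact hC
    · intro i
      rw [hrot i]
      fin_cases i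
      · exact ⟨hv0A, hv1A⟩
      · exact ⟨hv1B, hv2B⟩
      · exact ⟨hv2C, hv0C⟩
    · exact inj3 hp01 hp02 hp12
end

section
/- Let r ≥ 3 and let H be an r-uniform r-partite linear hypergraph. If H is G_r(3r−3, 3)-free, then H is also G_r(4r−5, 4)-free. -/
open Finset

theorem gfree3_implies_gfree4 {V : Type*} [DecidableEq V] (r : ℕ) (hr : 3 ≤ r)
    (H : Finset (Finset V)) (part : V → Fin r)
    (hpart : ∀ A ∈ H, ∀ i : Fin r, (A.filter fun x => part x = i).card = 1)
    (hlin : ∀ A ∈ H, ∀ B ∈ H, A ≠ B → (A ∩ B).card ≤ 1)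
    (hfree : GFree H (3 * r - 3) 3) :
    GFree H (4 * r - 5) 4 := by
  have hcard : ∀ A ∈ H, A.card = r := by
    intro A hA
    rw [Finset.card_eq_sum_card_fiberwise (f := part) (t := Finset.univ) (fun x _ => mem_univ _)]
    simp [hpart A hA]
  have hsing : ∀ A ∈ H, ∀ B ∈ H, A ≠ B → ∀ x ∈ A ∩ B, A ∩ B = {x} := by
    intro A hA B hB hne x hx
    apply Finset.eq_singleton_iff_unique_mem.mpr
    exact ⟨hx, fun y hy => Finset.card_le_one.mp (hlin A hA B hB hne) y hy x hx⟩
  have htriple : ∀ A ∈ H, ∀ B ∈ H, ∀ C ∈ H, A ≠ B → A ≠ C → B ≠ C →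
      (A ∩ B).Nonempty → (A ∩ C).Nonempty → (B ∩ C).Nonempty →
      ∃ x, A ∩ B = {x} ∧ A ∩ C = {x} ∧ B ∩ C = {x} := by
    intro A hA B hB C hC hAB hAC hBC n1 n2 n3
    have hSsub : ({A, B, C} : Finset (Finset V)) ⊆ H := by
      intro X hX
      simp only [mem_insert, mem_singleton] at hX
      rcases hX with h | h | h <;> subst h <;> assumption
    have hScard : ({A, B, C} : Finset (Finset V)).card = 3 := by
      rw [card_insert_of_notMem (by simp [hAB, hAC]),
        card_insert_of_notMem (by simp [hBC]), card_singleton]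
    have hu := hfree _ hSsub hScard
    have hbu : ({A, B, C} : Finset (Finset V)).biUnion id = A ∪ (B ∪ C) := by
      simp [Finset.biUnion_insert]
    rw [hbu] at hu
    have e1 : (A ∪ B).card + (A ∩ B).card = A.card + B.card :=
      card_union_add_card_inter A B
    have e2 : (A ∪ B ∪ C).card + ((A ∪ B) ∩ C).card = (A ∪ B).card + C.card :=
      card_union_add_card_inter _ _
    have e3 : (A ∪ B) ∩ C = (A ∩ C) ∪ (B ∩ C) := Finset.union_inter_distrib_right A B C
    have e4 : ((A ∩ C) ∪ (B ∩ C)).card + ((A ∩ C) ∩ (B ∩ C)).card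
        = (A ∩ C).card + (B ∩ C).card := card_union_add_card_inter _ _
    have e5 : (A ∩ C) ∩ (B ∩ C) = A ∩ B ∩ C := by
      ext y; simp only [mem_inter]; tauto
    rw [e3] at e2
    rw [e5] at e4
    have hassoc : A ∪ (B ∪ C) = A ∪ B ∪ C := (Finset.union_assoc A B C).symm
    rw [hassoc] at hu
    have c1 : (A ∩ B).card = 1 := le_antisymm (hlin A hA B hB hAB) (card_pos.mpr n1)
    have c2 : (A ∩ C).card = 1 := le_antisymm (hlin A hA C hC hAC) (card_pos.mpr n2)
    have c3 : (B ∩ C).card = 1 := le_antisymm (hlin B hB C hC hBC) (card_pos.mpr n3)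
    have hAr := hcard A hA
    have hBr := hcard B hB
    have hCr := hcard C hC
    have hpos : 1 ≤ (A ∩ B ∩ C).card := by omega
    obtain ⟨x, hx⟩ := card_pos.mp hpos
    have hxA : x ∈ A := (mem_inter.mp (mem_inter.mp hx).1).1
    have hxB : x ∈ B := (mem_inter.mp (mem_inter.mp hx).1).2
    have hxC : x ∈ C := (mem_inter.mp hx).2
    exact ⟨x, hsing A hA B hB hAB x (mem_inter.mpr ⟨hxA, hxB⟩),
      hsing A hA C hC hAC x (mem_inter.mpr ⟨hxA, hxC⟩),
      hsing B hB C hC hBC x (mem_inter.mpr ⟨hxB, hxC⟩)⟩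
  intro S hS hS4
  have hfinal : ∀ D ∈ S, (D ∩ ((S.erase D).biUnion id)).card ≤ 2 →
      4 * r - 5 + 1 ≤ (S.biUnion id).card := by
    intro D hD hle
    have hTsub : S.erase D ⊆ H := (erase_subset _ _).trans hS
    have hT3 : (S.erase D).card = 3 := by rw [card_erase_of_mem hD, hS4]
    have hu3 := hfree _ hTsub hT3
    have hbu : S.biUnion id = D ∪ (S.erase D).biUnion id := by
      conv_lhs => rw [← insert_erase hD]
      rw [biUnion_insert]
      rfl
    have e := card_union_add_card_inter D ((S.erase D).biUnion id)
    have hDr := hcard D (hS hD)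
    rw [hbu]
    omega
  by_cases hmeet : ∀ X ∈ S, ∀ Y ∈ S, X ≠ Y → (X ∩ Y).Nonempty
  · -- sunflower case
    have hne : S.Nonempty := by rw [← card_pos, hS4]; norm_num
    obtain ⟨D, hD⟩ := hne
    have hT3 : (S.erase D).card = 3 := by rw [card_erase_of_mem hD, hS4]
    obtain ⟨A, B, C, hAB, hAC, hBC, hTeq⟩ := card_eq_three.mp hT3
    have hAT : A ∈ S.erase D := hTeq ▸ (by simp)
    have hBT : B ∈ S.erase D := hTeq ▸ (by simp)
    have hCT : C ∈ S.erase D := hTeq ▸ (by simp)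
    have hAS : A ∈ S := mem_of_mem_erase hAT
    have hBS : B ∈ S := mem_of_mem_erase hBT
    have hCS : C ∈ S := mem_of_mem_erase hCT
    have hDA : D ≠ A := fun h => (mem_erase.mp hAT).1 h.symm
    have hDB : D ≠ B := fun h => (mem_erase.mp hBT).1 h.symm
    have hDC : D ≠ C := fun h => (mem_erase.mp hCT).1 h.symm
    obtain ⟨x, hxAB, hxAC, hxBC⟩ := htriple A (hS hAS) B (hS hBS) C (hS hCS) hAB hAC hBC
      (hmeet A hAS B hBS hAB) (hmeet A hAS C hCS hAC) (hmeet B hBS C hCS hBC)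
    obtain ⟨y, hyDA, hyDB, hyAB⟩ := htriple D (hS hD) A (hS hAS) B (hS hBS) hDA hDB hAB
      (hmeet D hD A hAS hDA) (hmeet D hD B hBS hDB) (hmeet A hAS B hBS hAB)
    obtain ⟨z, hzDA, hzDC, hzAC⟩ := htriple D (hS hD) A (hS hAS) C (hS hCS) hDA hDC hAC
      (hmeet D hD A hAS hDA) (hmeet D hD C hCS hDC) (hmeet A hAS C hCS hAC)
    have hyx : y = x := by
      have h := hxAB; rw [hyAB] at h; exact Finset.singleton_injective h
    have hzx : z = x := by
      have h := hxAC; rw [hzAC] at h; exact Finset.singleton_injective h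
    have hDAx : D ∩ A = {x} := by rw [hyDA, hyx]
    have hDBx : D ∩ B = {x} := by rw [hyDB, hyx]
    have hDCx : D ∩ C = {x} := by rw [hzDC, hzx]
    apply hfinal D hD
    have hsub : D ∩ ((S.erase D).biUnion id) ⊆ {x} := by
      intro w hw
      obtain ⟨hwD, hwU⟩ := mem_inter.mp hw
      obtain ⟨Y, hY, hwY⟩ := mem_biUnion.mp hwU
      rw [hTeq] at hY
      simp only [mem_insert, mem_singleton] at hY
      rcases hY with h | h | h <;> subst h
      · exact hDAx ▸ mem_inter.mpr ⟨hwD, hwY⟩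
      · exact hDBx ▸ mem_inter.mpr ⟨hwD, hwY⟩
      · exact hDCx ▸ mem_inter.mpr ⟨hwD, hwY⟩
    calc (D ∩ ((S.erase D).biUnion id)).card ≤ ({x} : Finset V).card := card_le_card hsub
      _ ≤ 2 := by rw [card_singleton]; omega
  · push_neg at hmeet
    obtain ⟨D, hD, X, hX, hneDX, hempty⟩ := hmeet
    apply hfinal D hD
    have hXT : X ∈ S.erase D := mem_erase.mpr ⟨fun h => hneDX h.symm, hX⟩
    have hbi : D ∩ ((S.erase D).biUnion id) = (S.erase D).biUnion (fun Y => D ∩ Y) := by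
      ext w
      simp only [mem_inter, mem_biUnion, id]
      tauto
    rw [hbi]
    calc ((S.erase D).biUnion fun Y => D ∩ Y).card
        ≤ ∑ Y ∈ S.erase D, (D ∩ Y).card := card_biUnion_le
      _ = ∑ Y ∈ (S.erase D).erase X, (D ∩ Y).card := by
          exact (Finset.sum_erase _ (by rw [hempty]; simp)).symm
      _ ≤ ((S.erase D).erase X).card • 1 := by
          apply Finset.sum_le_card_nsmul
          intro Y hY
          have hYS : Y ∈ S.erase D := mem_of_mem_erase hY
          exact hlin D (hS hD) Y (hS (mem_of_mem_erase hYS)) (fun h => (mem_erase.mp hYS).1 h.symm)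
      _ ≤ 2 := by
          rw [card_erase_of_mem hXT, card_erase_of_mem hD, hS4, smul_eq_mul]
end

section
/- Let r ≥ 3 and let H be an r-uniform r-partite linear hypergraph. If H is G_r(3r−3, 3)-free, then H is also G_r(5r−7, 5)-free. -/
open Finset

section AuxGfree

variable {V : Type*} [DecidableEq V]

lemma sum_deg (T : Finset (Finset V)) :
    ∑ v ∈ T.biUnion id, (T.filter fun A => v ∈ A).card = ∑ A ∈ T, A.card := by
  classical
  simp only [Finset.card_filter]
  rw [Finset.sum_comm]
  refine Finset.sum_congr rfl fun A hA => ?_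
  have hsub : A ⊆ T.biUnion id := Finset.subset_biUnion_of_mem id hA
  rw [← Finset.card_filter]
  congr 1
  ext v
  simp only [Finset.mem_filter]
  exact ⟨fun h => h.2, fun h => ⟨hsub h, h⟩⟩

lemma union_card_add (T : Finset (Finset V)) :
    (T.biUnion id).card + ∑ v ∈ T.biUnion id, ((T.filter fun A => v ∈ A).card - 1)
      = ∑ A ∈ T, A.card := by
  rw [← sum_deg, Finset.card_eq_sum_ones, ← Finset.sum_add_distrib]
  refine Finset.sum_congr rfl fun v hv => ?_
  obtain ⟨A, hA, hvA⟩ := Finset.mem_biUnion.1 hv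
  have : 1 ≤ (T.filter fun A => v ∈ A).card :=
    Finset.card_pos.2 ⟨A, Finset.mem_filter.2 ⟨hA, (by simpa using hvA)⟩⟩
  omega


lemma six_le_triples {S : Finset (Finset V)} (hS : S.card = 5) {A : Finset V} (hA : A ∈ S) :
    6 ≤ (((S.powersetCard 3)).filter fun T => A ∈ T).card := by
  classical
  have hcard : ((S.erase A).powersetCard 2).card = 6 := by
    rw [card_powersetCard, Finset.card_erase_of_mem hA, hS]; rfl
  rw [← hcard]
  apply Finset.card_le_card_of_injOn (fun T => insert A T)
  · intro T hT
    rw [Finset.mem_coe, Finset.mem_powersetCard] at hT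
    have hAT : A ∉ T := fun h => (Finset.mem_erase.1 (hT.1 h)).1 rfl
    refine Finset.mem_filter.2 ⟨Finset.mem_powersetCard.2 ⟨?_, ?_⟩, Finset.mem_insert_self _ _⟩
    · exact Finset.insert_subset hA (hT.1.trans (Finset.erase_subset _ _))
    · rw [Finset.card_insert_of_notMem hAT, hT.2]
  · intro T hT T' hT' h
    rw [Finset.mem_coe, Finset.mem_powersetCard] at hT hT'
    have h1 : A ∉ T := fun h => (Finset.mem_erase.1 (hT.1 h)).1 rfl
    have h2 : A ∉ T' := fun h => (Finset.mem_erase.1 (hT'.1 h)).1 rfl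
    have := congrArg (fun s => Finset.erase s A) h
    simpa [Finset.erase_insert_of_ne, Finset.erase_insert h1, Finset.erase_insert h2] using this

lemma three_le_pairs {S : Finset (Finset V)} (hS : S.card = 5) {D : Finset (Finset V)}
    (hD : D ⊆ S) (hDc : D.card = 2) :
    3 ≤ (((S.powersetCard 3)).filter fun T => D ⊆ T).card := by
  classical
  have hSD : (S \ D).card = 3 := by rw [Finset.card_sdiff_of_subset hD, hS, hDc]
  rw [← hSD]
  apply Finset.card_le_card_of_injOn (fun x => insert x D)
  · intro x hx
    rw [Finset.mem_coe, Finset.mem_sdiff] at hx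
    refine Finset.mem_filter.2 ⟨Finset.mem_powersetCard.2 ⟨Finset.insert_subset hx.1 hD, ?_⟩,
      Finset.subset_insert _ _⟩
    rw [Finset.card_insert_of_notMem hx.2, hDc, hSD]
  · intro x hx y hy h
    rw [Finset.mem_coe, Finset.mem_sdiff] at hx hy
    by_contra hne
    have h' : insert x D = insert y D := h
    have hxy : x ∈ insert y D := by rw [← h']; exact Finset.mem_insert_self x D
    rcases Finset.mem_insert.1 hxy with h' | h'
    · exact hne h'
    · exact hx.2 h'

lemma sum_filter_card_ge {S : Finset (Finset V)} (hS : S.card = 5) (p : Finset V → Prop)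
    [DecidablePred p] :
    6 * (S.filter p).card ≤ ∑ T ∈ S.powersetCard 3, (T.filter p).card := by
  classical
  have step1 : ∀ T ∈ S.powersetCard 3,
      (T.filter p).card = ∑ A ∈ S, if A ∈ T ∧ p A then 1 else 0 := by
    intro T hT
    have hTS : T ⊆ S := (Finset.mem_powersetCard.1 hT).1
    rw [← Finset.card_filter]
    congr 1
    ext A
    simp only [Finset.mem_filter]
    exact ⟨fun h => ⟨hTS h.1, h.1, h.2⟩, fun h => ⟨h.2.1, h.2.2⟩⟩
  rw [Finset.sum_congr rfl step1, Finset.sum_comm]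
  have step2 : ∀ A ∈ S, ∑ T ∈ S.powersetCard 3, (if A ∈ T ∧ p A then 1 else 0)
      = if p A then ((S.powersetCard 3).filter fun T => A ∈ T).card else 0 := by
    intro A hA
    by_cases hp : p A
    · simp only [hp, and_true, if_true, Finset.card_filter]
    · simp [hp]
  rw [Finset.sum_congr rfl step2]
  have : 6 * (S.filter p).card = ∑ A ∈ S, if p A then 6 else 0 := by
    rw [Finset.sum_ite, Finset.sum_const, Finset.sum_const]
    simp [Nat.mul_comm]
  rw [this]
  refine Finset.sum_le_sum fun A hA => ?_
  by_cases hp : p A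
  · simpa [hp] using six_le_triples hS hA
  · simp [hp]

lemma key_vertex {S : Finset (Finset V)} (hS : S.card = 5) (p : Finset V → Prop)
    [DecidablePred p] :
    3 * ((S.filter p).card - 1) ≤ ∑ T ∈ S.powersetCard 3, ((T.filter p).card - 1) := by
  classical
  set d := (S.filter p).card with hd
  rcases Nat.lt_or_ge d 2 with h2 | h2
  · have : d - 1 = 0 := by omega
    rw [this]; simp
  rcases Nat.lt_or_ge d 3 with h3 | h3
  · -- d = 2
    have hd2 : d = 2 := by omega
    set D := S.filter p with hD
    have hpairs := three_le_pairs hS (Finset.filter_subset p S) hd2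
    calc 3 * (d - 1) = 3 := by omega
      _ ≤ ((S.powersetCard 3).filter fun T => D ⊆ T).card := hpairs
      _ = ∑ T ∈ (S.powersetCard 3).filter (fun T => D ⊆ T), 1 := by
            rw [Finset.card_eq_sum_ones]
      _ ≤ ∑ T ∈ (S.powersetCard 3).filter (fun T => D ⊆ T), ((T.filter p).card - 1) := by
            refine Finset.sum_le_sum fun T hT => ?_
            have hDT : D ⊆ T := (Finset.mem_filter.1 hT).2
            have : D ⊆ T.filter p := fun A hA =>
              Finset.mem_filter.2 ⟨hDT hA, (Finset.mem_filter.1 hA).2⟩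
            have := Finset.card_le_card this
            omega
      _ ≤ ∑ T ∈ S.powersetCard 3, ((T.filter p).card - 1) :=
            Finset.sum_le_sum_of_subset (Finset.filter_subset _ _)
  · -- d ≥ 3
    have hP : (S.powersetCard 3).card = 10 := by
      rw [Finset.card_powersetCard, hS]; rfl
    have h6 := sum_filter_card_ge hS p
    have hsub : ∑ T ∈ S.powersetCard 3, (T.filter p).card
        ≤ (∑ T ∈ S.powersetCard 3, ((T.filter p).card - 1)) + 10 := by
      rw [← hP, Finset.card_eq_sum_ones, ← Finset.sum_add_distrib]
      exact Finset.sum_le_sum fun T _ => by omega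
    omega

end AuxGfree

theorem gfree3_implies_gfree5 {V : Type*} [DecidableEq V] (r : ℕ) (hr : 3 ≤ r)
    (H : Finset (Finset V)) (part : V → Fin r)
    (hpart : ∀ A ∈ H, ∀ i : Fin r, (A.filter fun x => part x = i).card = 1)
    (hlin : ∀ A ∈ H, ∀ B ∈ H, A ≠ B → (A ∩ B).card ≤ 1)
    (hfree : GFree H (3 * r - 3) 3) :
    GFree H (5 * r - 7) 5 := by
  classical
  intro S hSH hS5
  set U := S.biUnion id with hU
  -- every edge has r vertices
  have hcard : ∀ A ∈ H, A.card = r := by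
    intro A hA
    rw [Finset.card_eq_sum_card_fiberwise (f := part) (t := Finset.univ)
      (fun x _ => Finset.mem_univ _)]
    simp only [hpart A hA]
    simp
  -- per-triple excess bound
  have htriple : ∀ T ∈ S.powersetCard 3,
      ∑ v ∈ U, ((T.filter fun A => v ∈ A).card - 1) ≤ 2 := by
    intro T hT
    obtain ⟨hTS, hT3⟩ := Finset.mem_powersetCard.1 hT
    have hTH : T ⊆ H := hTS.trans hSH
    have hfr := hfree T hTH hT3
    have hsum : ∑ A ∈ T, A.card = 3 * r := by
      rw [Finset.sum_congr rfl fun A hA => hcard A (hTH hA)]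
      simp [hT3, Nat.mul_comm]
    have hid := union_card_add T
    rw [hsum] at hid
    -- extend the index set from T.biUnion id to U
    have hsub : T.biUnion id ⊆ U := Finset.biUnion_subset_biUnion_of_subset_left id hTS
    have hext : ∑ v ∈ U, ((T.filter fun A => v ∈ A).card - 1)
        = ∑ v ∈ T.biUnion id, ((T.filter fun A => v ∈ A).card - 1) := by
      refine (Finset.sum_subset hsub fun v _ hv => ?_).symm
      have : (T.filter fun A => v ∈ A) = ∅ := by
        rw [Finset.filter_eq_empty_iff]
        intro A hA hvA
        exact hv (Finset.mem_biUnion.2 ⟨A, hA, hvA⟩)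
      rw [this]
      rfl
    rw [hext]
    omega
  -- sum over all triples
  have hP : (S.powersetCard 3).card = 10 := by
    rw [Finset.card_powersetCard, hS5]; rfl
  have hsumP : ∑ T ∈ S.powersetCard 3, ∑ v ∈ U, ((T.filter fun A => v ∈ A).card - 1) ≤ 20 := by
    calc ∑ T ∈ S.powersetCard 3, ∑ v ∈ U, ((T.filter fun A => v ∈ A).card - 1)
        ≤ ∑ _T ∈ S.powersetCard 3, 2 := Finset.sum_le_sum htriple
      _ = 20 := by rw [Finset.sum_const, hP]; rfl
  rw [Finset.sum_comm] at hsumP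
  -- per-vertex lower bound
  have hkey : ∑ v ∈ U, 3 * ((S.filter fun A => v ∈ A).card - 1)
      ≤ ∑ v ∈ U, ∑ T ∈ S.powersetCard 3, ((T.filter fun A => v ∈ A).card - 1) :=
    Finset.sum_le_sum fun v _ => key_vertex hS5 (fun A => v ∈ A)
  have h3E : 3 * ∑ v ∈ U, ((S.filter fun A => v ∈ A).card - 1) ≤ 20 := by
    rw [Finset.mul_sum]
    exact hkey.trans hsumP
  -- total count for S
  have hsumS : ∑ A ∈ S, A.card = 5 * r := by
    rw [Finset.sum_congr rfl fun A hA => hcard A (hSH hA)]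
    simp [hS5, Nat.mul_comm]
  have hid := union_card_add S
  rw [hsumS] at hid
  rw [← hU] at hid
  omega
end

section
/- Let r ≥ 3 and let H be an r-uniform r-partite linear hypergraph containing no rainbow cycles of length three or four. Then H is G_r(7r−11, 7)-free. -/
open Finset

/-- Build a rainbow 3-cycle : vertices x,y,z with x,y ∈ B; y,z ∈ C; z,x ∈ A. -/
lemma no_c3 {V : Type*} {r : ℕ} {H : Finset (Finset V)} {part : V → Fin r}
    (h3 : ¬ HasRainbowCycle H part 3) {A B C : Finset V}
    (hA : A ∈ H) (hB : B ∈ H) (hC : C ∈ H)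
    (hAB : A ≠ B) (hBC : B ≠ C) (hAC : A ≠ C) {x y z : V}
    (hxB : x ∈ B) (hyB : y ∈ B) (hyC : y ∈ C) (hzC : z ∈ C) (hzA : z ∈ A) (hxA : x ∈ A)
    (pxy : part x ≠ part y) (pyz : part y ≠ part z) (pxz : part x ≠ part z) : False := by
  apply h3
  refine ⟨![x, y, z], ![B, C, A], ?_, ?_, ?_, ?_, ?_⟩
  · intro i j hij
    fin_cases i <;> fin_cases j <;> simp_all
  · intro i j hij
    fin_cases i <;> fin_cases j <;> simp_all
  · intro i; fin_cases i <;> simp_all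
  · intro i
    have e0 : finRotate 3 0 = 1 := by decide
    have e1 : finRotate 3 1 = 2 := by decide
    have e2 : finRotate 3 2 = 0 := by decide
    fin_cases i <;> simp_all
  · intro i j hij
    simp only at hij
    fin_cases i <;> fin_cases j <;> simp_all

/-- Build a rainbow 4-cycle: w,x ∈ E1; x,y ∈ E2; y,z ∈ E3; z,w ∈ E4. -/
lemma no_c4 {V : Type*} {r : ℕ} {H : Finset (Finset V)} {part : V → Fin r}
    (h4 : ¬ HasRainbowCycle H part 4) {E1 E2 E3 E4 : Finset V}
    (h1 : E1 ∈ H) (h2 : E2 ∈ H) (h3 : E3 ∈ H) (h4' : E4 ∈ H)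
    (e12 : E1 ≠ E2) (e13 : E1 ≠ E3) (e14 : E1 ≠ E4)
    (e23 : E2 ≠ E3) (e24 : E2 ≠ E4) (e34 : E3 ≠ E4) {w x y z : V}
    (hw1 : w ∈ E1) (hx1 : x ∈ E1) (hx2 : x ∈ E2) (hy2 : y ∈ E2)
    (hy3 : y ∈ E3) (hz3 : z ∈ E3) (hz4 : z ∈ E4) (hw4 : w ∈ E4)
    (pwx : part w ≠ part x) (pwy : part w ≠ part y) (pwz : part w ≠ part z)
    (pxy : part x ≠ part y) (pxz : part x ≠ part z) (pyz : part y ≠ part z) : False := by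
  apply h4
  refine ⟨![w, x, y, z], ![E1, E2, E3, E4], ?_, ?_, ?_, ?_, ?_⟩
  · intro i j hij
    fin_cases i <;> fin_cases j <;> simp_all
  · intro i j hij
    fin_cases i <;> fin_cases j <;> simp_all
  · intro i; fin_cases i <;> simp_all
  · intro i
    have e0 : finRotate 4 0 = 1 := by decide
    have e1 : finRotate 4 1 = 2 := by decide
    have e2 : finRotate 4 2 = 3 := by decide
    have e3 : finRotate 4 3 = 0 := by decide
    fin_cases i <;> simp_all
  · intro i j hij
    simp only at hij
    fin_cases i <;> fin_cases j <;> simp_all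

/-- The 2×4 "matrix" lemma used to bound codegrees. -/
lemma pq4 {α : Type*} {p q : Fin 4 → α}
    (hp : ∀ i j, i ≠ j → p i ≠ p j) (hq : ∀ i j, i ≠ j → q i ≠ q j)
    (hQ : ∀ i j, i ≠ j → p i = q j ∨ q i = p j) : False := by
  rcases hQ 0 1 (by decide) with h01 | h01
  · rcases hQ 0 2 (by decide) with h02 | h02
    · exact hq 1 2 (by decide) (h01 ▸ h02)
    · rcases hQ 0 3 (by decide) with h03 | h03
      · exact hq 1 3 (by decide) (h01 ▸ h03)
      · exact hp 2 3 (by decide) (h02 ▸ h03)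
  · rcases hQ 0 2 (by decide) with h02 | h02
    · rcases hQ 0 3 (by decide) with h03 | h03
      · exact hq 2 3 (by decide) (h02 ▸ h03)
      · exact hp 1 3 (by decide) (h01 ▸ h03)
    · exact hp 1 2 (by decide) (h01 ▸ h02)

/-- extract four pairwise distinct elements from a finset of size ≥ 4 -/
lemma exists_four {α : Type*} [DecidableEq α] {s : Finset α} (h : 4 ≤ s.card) :
    ∃ C : Fin 4 → α, (∀ i, C i ∈ s) ∧ (∀ i j, i ≠ j → C i ≠ C j) := by
  obtain ⟨a, ha⟩ := (Finset.card_pos (s := s)).mp (by omega)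
  have e1 := Finset.card_erase_of_mem ha
  obtain ⟨b, hb⟩ := (Finset.card_pos (s := s.erase a)).mp (by omega)
  have e2 := Finset.card_erase_of_mem hb
  obtain ⟨c, hc⟩ := (Finset.card_pos (s := (s.erase a).erase b)).mp (by omega)
  have e3 := Finset.card_erase_of_mem hc
  obtain ⟨d, hd⟩ := (Finset.card_pos (s := ((s.erase a).erase b).erase c)).mp (by omega)
  simp only [Finset.mem_erase] at hb hc hd
  obtain ⟨hba, hbs⟩ := hb
  obtain ⟨hcb, hca, hcs⟩ := hc
  obtain ⟨hdc, hdb, hda, hds⟩ := hd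
  have hab : ¬a = b := fun h => hba h.symm
  have hac : ¬a = c := fun h => hca h.symm
  have had : ¬a = d := fun h => hda h.symm
  have hbc : ¬b = c := fun h => hcb h.symm
  have hbd : ¬b = d := fun h => hdb h.symm
  have hcd : ¬c = d := fun h => hdc h.symm
  refine ⟨![a, b, c, d], ?_, ?_⟩
  · intro i; fin_cases i <;> simpa
  · intro i j hij; fin_cases i <;> fin_cases j <;> simp_all

section Structural

variable {V : Type*} [DecidableEq V] {r : ℕ} {H : Finset (Finset V)} {part : V → Fin r}

lemma parts_ne (hpart : ∀ A ∈ H, ∀ i : Fin r, (A.filter fun x => part x = i).card = 1)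
    {A : Finset V} (hA : A ∈ H) {x y : V} (hx : x ∈ A) (hy : y ∈ A) (hxy : x ≠ y) :
    part x ≠ part y := by
  intro hpe
  have h1 : 1 < (A.filter fun z => part z = part y).card := by
    apply Finset.one_lt_card.mpr
    exact ⟨x, Finset.mem_filter.mpr ⟨hx, hpe⟩, y, Finset.mem_filter.mpr ⟨hy, rfl⟩, hxy⟩
  rw [hpart A hA (part y)] at h1
  omega

/-- linearity: two distinct edges meet in at most one vertex -/
lemma lin_pt (hlin : ∀ A ∈ H, ∀ B ∈ H, A ≠ B → (A ∩ B).card ≤ 1)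
    {S : Finset (Finset V)} (hSH : S ⊆ H) {A B : Finset V} (hA : A ∈ S) (hB : B ∈ S)
    (hAB : A ≠ B) {x y : V} (hxA : x ∈ A) (hxB : x ∈ B) (hyA : y ∈ A) (hyB : y ∈ B) :
    x = y := by
  have h := hlin A (hSH hA) B (hSH hB) hAB
  exact Finset.card_le_one.mp h x (Finset.mem_inter.mpr ⟨hxA, hxB⟩) y
    (Finset.mem_inter.mpr ⟨hyA, hyB⟩)

/-- three pairwise intersecting edges have a common vertex -/
lemma tri_common (hpart : ∀ A ∈ H, ∀ i : Fin r, (A.filter fun x => part x = i).card = 1)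
    (h3 : ¬ HasRainbowCycle H part 3)
    {S : Finset (Finset V)} (hSH : S ⊆ H) {A B C : Finset V}
    (hA : A ∈ S) (hB : B ∈ S) (hC : C ∈ S)
    (hAB : A ≠ B) (hBC : B ≠ C) (hAC : A ≠ C) {x y z : V}
    (hxA : x ∈ A) (hxB : x ∈ B) (hyB : y ∈ B) (hyC : y ∈ C) (hzA : z ∈ A) (hzC : z ∈ C) :
    ∃ u, u ∈ A ∧ u ∈ B ∧ u ∈ C := by
  by_cases hxy : x = y
  · exact ⟨x, hxA, hxB, hxy ▸ hyC⟩
  by_cases hxz : x = z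
  · exact ⟨x, hxA, hxB, hxz ▸ hzC⟩
  by_cases hyz : y = z
  · exact ⟨y, hyz ▸ hzA, hyB, hyC⟩
  exact absurd (no_c3 h3 (hSH hA) (hSH hB) (hSH hC) hAB hBC hAC hxB hyB hyC hzC hzA hxA
    (parts_ne hpart (hSH hB) hxB hyB hxy) (parts_ne hpart (hSH hC) hyC hzC hyz)
    (parts_ne hpart (hSH hA) hxA hzA hxz)) (fun h => h)

/-- the codegree bound: two disjoint edges have at most 3 common neighbours -/
lemma codeg_le (hpart : ∀ A ∈ H, ∀ i : Fin r, (A.filter fun x => part x = i).card = 1)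
    (hlin : ∀ A ∈ H, ∀ B ∈ H, A ≠ B → (A ∩ B).card ≤ 1)
    (h3 : ¬ HasRainbowCycle H part 3) (h4 : ¬ HasRainbowCycle H part 4)
    {S : Finset (Finset V)} (hSH : S ⊆ H) {A Z : Finset V}
    (hA : A ∈ S) (hZ : Z ∈ S) (hAZ : A ≠ Z) (hdisj : ∀ u, u ∈ A → u ∈ Z → False) :
    (S.filter fun B => B ≠ A ∧ B ≠ Z ∧ (A ∩ B).Nonempty ∧ (Z ∩ B).Nonempty).card ≤ 3 := by
  by_contra hcon
  obtain ⟨C, hCmem, hCne⟩ := exists_four (s := S.filter fun B => B ≠ A ∧ B ≠ Z ∧ (A ∩ B).Nonempty ∧ (Z ∩ B).Nonempty) (by omega)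
  have hCS : ∀ i, C i ∈ S := fun i => (Finset.mem_filter.mp (hCmem i)).1
  have hprop : ∀ i, C i ≠ A ∧ C i ≠ Z ∧ (A ∩ C i).Nonempty ∧ (Z ∩ C i).Nonempty :=
    fun i => (Finset.mem_filter.mp (hCmem i)).2
  have hu : ∀ i, ∃ x, x ∈ A ∧ x ∈ C i := by
    intro i
    obtain ⟨x, hx⟩ := (hprop i).2.2.1
    exact ⟨x, Finset.mem_inter.mp hx⟩
  have hw : ∀ i, ∃ x, x ∈ Z ∧ x ∈ C i := by
    intro i
    obtain ⟨x, hx⟩ := (hprop i).2.2.2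
    exact ⟨x, Finset.mem_inter.mp hx⟩
  choose u huA huC using hu
  choose w hwZ hwC using hw
  -- u's pairwise distinct
  have uinj : ∀ i j, i ≠ j → u i ≠ u j := by
    intro i j hij he
    obtain ⟨q, hqZ, hqi, hqj⟩ := tri_common hpart h3 hSH hZ (hCS i) (hCS j)
      (Ne.symm (hprop i).2.1) (hCne i j hij) (Ne.symm (hprop j).2.1)
      (x := w i) (y := u i) (z := w j) (hwZ i) (hwC i) (huC i) (he ▸ huC j) (hwZ j) (hwC j)
    have : q = u i := lin_pt hlin hSH (hCS i) (hCS j) (hCne i j hij) hqi hqj (huC i) (he ▸ huC j)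
    exact hdisj (u i) (huA i) (this ▸ hqZ)
  have winj : ∀ i j, i ≠ j → w i ≠ w j := by
    intro i j hij he
    obtain ⟨q, hqA, hqi, hqj⟩ := tri_common hpart h3 hSH hA (hCS i) (hCS j)
      (Ne.symm (hprop i).1) (hCne i j hij) (Ne.symm (hprop j).1)
      (x := u i) (y := w i) (z := u j) (huA i) (huC i) (hwC i) (he ▸ hwC j) (huA j) (huC j)
    have : q = w i := lin_pt hlin hSH (hCS i) (hCS j) (hCne i j hij) hqi hqj (hwC i) (he ▸ hwC j)
    exact hdisj (w i) (this ▸ hqA) (hwZ i)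
  have uwne : ∀ i j, u i ≠ w j := by
    intro i j he
    exact hdisj (u i) (huA i) (he ▸ hwZ j)
  have hp : ∀ i j, i ≠ j → part (u i) ≠ part (u j) :=
    fun i j hij => parts_ne hpart (hSH hA) (huA i) (huA j) (uinj i j hij)
  have hq : ∀ i j, i ≠ j → part (w i) ≠ part (w j) :=
    fun i j hij => parts_ne hpart (hSH hZ) (hwZ i) (hwZ j) (winj i j hij)
  have hpqi : ∀ i, part (u i) ≠ part (w i) :=
    fun i => parts_ne hpart (hSH (hCS i)) (huC i) (hwC i) (uwne i i)
  have hQ : ∀ i j, i ≠ j → part (u i) = part (w j) ∨ part (w i) = part (u j) := by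
    intro i j hij
    by_contra hcc
    push_neg at hcc
    obtain ⟨h1, h2⟩ := hcc
    exact no_c4 h4 (hSH (hCS i)) (hSH hZ) (hSH (hCS j)) (hSH hA)
      ((hprop i).2.1) (hCne i j hij) ((hprop i).1) (Ne.symm (hprop j).2.1) hAZ.symm ((hprop j).1)
      (huC i) (hwC i) (hwZ i) (hwZ j) (hwC j) (huC j) (huA j) (huA i)
      (hpqi i) h1 (hp i j hij) (hq i j hij) h2 (fun h => hpqi j h.symm)
  exact pq4 hp hq hQ

end Structural

section Main

variable {V : Type*} [DecidableEq V] {r : ℕ} {H : Finset (Finset V)} {part : V → Fin r}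

lemma main_bound (hpart : ∀ A ∈ H, ∀ i : Fin r, (A.filter fun x => part x = i).card = 1)
    (hlin : ∀ A ∈ H, ∀ B ∈ H, A ≠ B → (A ∩ B).card ≤ 1)
    (h3 : ¬ HasRainbowCycle H part 3) (h4 : ¬ HasRainbowCycle H part 4)
    {S : Finset (Finset V)} (hSH : S ⊆ H) (hS7 : S.card = 7) :
    ∑ v ∈ S.biUnion id, ((S.filter fun A => v ∈ A).card - 1) ≤ 10 := by
  classical
  set U := S.biUnion id with hU
  set d : V → ℕ := fun v => (S.filter fun A => v ∈ A).card with hd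
  set W := U.filter (fun v => 2 ≤ d v) with hW
  have memU : ∀ {v : V} {A : Finset V}, A ∈ S → v ∈ A → v ∈ U := by
    intro v A hA hv
    exact Finset.mem_biUnion.mpr ⟨A, hA, hv⟩
  have memW : ∀ {v : V} {A B : Finset V}, A ∈ S → B ∈ S → A ≠ B → v ∈ A → v ∈ B → v ∈ W := by
    intro v A B hA hB hAB hvA hvB
    refine Finset.mem_filter.mpr ⟨memU hA hvA, ?_⟩
    exact Finset.one_lt_card.mpr ⟨A, Finset.mem_filter.mpr ⟨hA, hvA⟩,
      B, Finset.mem_filter.mpr ⟨hB, hvB⟩, hAB⟩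
  have hred : ∑ v ∈ U, (d v - 1) = ∑ v ∈ W, (d v - 1) := by
    refine (Finset.sum_subset (Finset.filter_subset _ _) ?_).symm
    intro v hvU hvW
    have : ¬ 2 ≤ d v := fun h => hvW (Finset.mem_filter.mpr ⟨hvU, h⟩)
    omega
  show ∑ v ∈ U, (d v - 1) ≤ 10
  rw [hred]
  by_contra hcon
  have hF : 11 ≤ ∑ v ∈ W, (d v - 1) := by omega
  by_cases hbig : ∃ v ∈ W, 4 ≤ d v
  -- ================= CASE I : a vertex of degree ≥ 4 =================
  · obtain ⟨v0, hv0W, hv04⟩ := hbig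
    set L0 := S.filter (fun A => v0 ∈ A) with hL0
    set O := S.filter (fun A => v0 ∉ A) with hO
    have hLOcard : L0.card + O.card = 7 := by
      rw [hL0, hO, Finset.card_filter_add_card_filter_not, hS7]
    have hdL0 : d v0 = L0.card := rfl
    have hOmem : ∀ {B : Finset V}, B ∈ O ↔ B ∈ S ∧ v0 ∉ B := by
      intro B; simp [hO]
    have hL0mem : ∀ {B : Finset V}, B ∈ L0 ↔ B ∈ S ∧ v0 ∈ B := by
      intro B; simp [hL0]
    have hO3 : O.card ≤ 3 := by omega
    -- the three groups
    have hsplit1 : ∑ v ∈ W, (d v - 1) =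
        (d v0 - 1) + ∑ v ∈ W.erase v0, (d v - 1) :=
      (Finset.add_sum_erase W _ hv0W).symm
    set p : V → Prop := fun v => ∃ A ∈ L0, v ∈ A with hp
    have hsplit2 : ∑ v ∈ W.erase v0, (d v - 1) =
        ∑ v ∈ (W.erase v0).filter p, (d v - 1) +
        ∑ v ∈ (W.erase v0).filter (fun v => ¬ p v), (d v - 1) :=
      (Finset.sum_filter_add_sum_filter_not _ _ _).symm
    -- cross part
    have hcross1 : ∀ v ∈ (W.erase v0).filter p, d v - 1 ≤ (O.filter (fun B => v ∈ B)).card := by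
      intro v hv
      obtain ⟨hv1, hv2⟩ := Finset.mem_filter.mp hv
      have hvne : v ≠ v0 := (Finset.mem_erase.mp hv1).1
      have h1 : (L0.filter (fun B => v ∈ B)).card ≤ 1 := by
        refine Finset.card_le_one.mpr ?_
        intro B hB B' hB'
        obtain ⟨hBL, hvB⟩ := Finset.mem_filter.mp hB
        obtain ⟨hBL', hvB'⟩ := Finset.mem_filter.mp hB'
        by_contra hne
        exact hvne (lin_pt hlin hSH (hL0mem.mp hBL).1 (hL0mem.mp hBL').1 hne
          hvB hvB' (hL0mem.mp hBL).2 (hL0mem.mp hBL').2)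
      have h2 : S.filter (fun B => v ∈ B) =
          L0.filter (fun B => v ∈ B) ∪ O.filter (fun B => v ∈ B) := by
        rw [hL0, hO, ← Finset.filter_union, Finset.filter_union_filter_not_eq]
      have h3' : d v ≤ 1 + (O.filter (fun B => v ∈ B)).card := by
        calc d v = (S.filter (fun B => v ∈ B)).card := rfl
        _ ≤ (L0.filter (fun B => v ∈ B)).card + (O.filter (fun B => v ∈ B)).card := by
            rw [h2]; exact Finset.card_union_le _ _
        _ ≤ 1 + (O.filter (fun B => v ∈ B)).card := by omega
      omega
    have hcross2 : ∑ v ∈ (W.erase v0).filter p, (O.filter (fun B => v ∈ B)).card ≤ O.card := by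
      have hswap : ∑ v ∈ (W.erase v0).filter p, (O.filter (fun B => v ∈ B)).card
          = ∑ B ∈ O, (((W.erase v0).filter p).filter (fun v => v ∈ B)).card := by
        simp only [Finset.card_filter]
        exact Finset.sum_comm
      rw [hswap]
      have : ∀ B ∈ O, (((W.erase v0).filter p).filter (fun v => v ∈ B)).card ≤ 1 := by
        intro B hBO
        refine Finset.card_le_one.mpr ?_
        intro x hx y hy
        obtain ⟨hx1, hxB⟩ := Finset.mem_filter.mp hx
        obtain ⟨hy1, hyB⟩ := Finset.mem_filter.mp hy
        obtain ⟨A, hAL, hxA⟩ := (Finset.mem_filter.mp hx1).2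
        obtain ⟨A', hAL', hyA⟩ := (Finset.mem_filter.mp hy1).2
        obtain ⟨hAS, hv0A⟩ := hL0mem.mp hAL
        obtain ⟨hAS', hv0A'⟩ := hL0mem.mp hAL'
        obtain ⟨hBS, hv0B⟩ := hOmem.mp hBO
        have hABne : A ≠ B := fun h => hv0B (h ▸ hv0A)
        have hABne' : A' ≠ B := fun h => hv0B (h ▸ hv0A')
        by_cases hAA : A = A'
        · exact lin_pt hlin hSH hAS hBS hABne hxA hxB (hAA ▸ hyA) hyB
        · obtain ⟨q, hqA, hqA', hqB⟩ := tri_common hpart h3 hSH hAS hAS' hBS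
            hAA hABne' hABne (x := v0) (y := y) (z := x) hv0A hv0A' hyA hyB hxA hxB
          have : q = v0 := lin_pt hlin hSH hAS hAS' hAA hqA hqA' hv0A hv0A'
          exact absurd (this ▸ hqB) hv0B
      calc ∑ B ∈ O, (((W.erase v0).filter p).filter (fun v => v ∈ B)).card
          ≤ ∑ _B ∈ O, 1 := Finset.sum_le_sum this
        _ = O.card := by simp
    -- off part
    set offF := (W.erase v0).filter (fun v => ¬ p v) with hoffF
    have hoffsub : ∀ v ∈ offF, (S.filter (fun B => v ∈ B)) ⊆ O := by
      intro v hv B hB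
      obtain ⟨hBS, hvB⟩ := Finset.mem_filter.mp hB
      refine hOmem.mpr ⟨hBS, ?_⟩
      intro hv0B
      exact (Finset.mem_filter.mp hv).2 ⟨B, hL0mem.mpr ⟨hBS, hv0B⟩, hvB⟩
    have hoffW : ∀ v ∈ offF, 2 ≤ d v := by
      intro v hv
      exact (Finset.mem_filter.mp
        ((Finset.mem_erase.mp (Finset.mem_filter.mp hv).1).2)).2
    have hoff : ∑ v ∈ offF, (d v - 1) ≤ 3 := by
      by_cases hex3 : ∃ v' ∈ offF, 3 ≤ d v'
      · obtain ⟨v', hv', hd3⟩ := hex3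
        have heq : offF = {v'} := by
          apply Finset.eq_singleton_iff_unique_mem.mpr
          refine ⟨hv', ?_⟩
          intro x hx
          have hfull : O ⊆ S.filter (fun B => v' ∈ B) := by
            have := Finset.eq_of_subset_of_card_le (hoffsub v' hv')
              (le_trans hO3 hd3)
            exact this ▸ Finset.Subset.refl _
          have h2x : 2 ≤ d x := hoffW x hx
          obtain ⟨B, hB, B', hB', hBB⟩ := Finset.one_lt_card.mp (by omega : 1 < d x)
          obtain ⟨hBS, hxB⟩ := Finset.mem_filter.mp hB
          obtain ⟨hBS', hxB'⟩ := Finset.mem_filter.mp hB'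
          have hBO : B ∈ O := hoffsub x hx hB
          have hBO' : B' ∈ O := hoffsub x hx hB'
          have hvB : v' ∈ B := (Finset.mem_filter.mp (hfull hBO)).2
          have hvB' : v' ∈ B' := (Finset.mem_filter.mp (hfull hBO')).2
          exact lin_pt hlin hSH hBS hBS' hBB hxB hxB' hvB hvB'
        rw [heq, Finset.sum_singleton]
        have : d v' ≤ O.card := Finset.card_le_card (hoffsub v' hv')
        omega
      · push_neg at hex3
        have hterms : ∀ v ∈ offF, d v - 1 ≤ 1 := by
          intro v hv
          have := hex3 v hv
          omega
        have hcard : offF.card ≤ 3 := by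
          have hinj : ∀ v ∈ offF, (S.filter (fun B => v ∈ B)) ∈ O.powersetCard 2 := by
            intro v hv
            refine Finset.mem_powersetCard.mpr ⟨hoffsub v hv, ?_⟩
            have h1 := hoffW v hv
            have h2 := hex3 v hv
            have h3 : (S.filter (fun B => v ∈ B)).card = d v := rfl
            omega
          have hinj2 : Set.InjOn (fun v => S.filter (fun B => v ∈ B)) offF := by
            intro x hx y hy hxy
            simp only at hxy
            have h2x : 2 ≤ d x := hoffW x (by simpa using hx)
            obtain ⟨B, hB, B', hB', hBB⟩ := Finset.one_lt_card.mp (by omega : 1 < d x)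
            obtain ⟨hBS, hxB⟩ := Finset.mem_filter.mp hB
            obtain ⟨hBS', hxB'⟩ := Finset.mem_filter.mp hB'
            have hyB : y ∈ B := (Finset.mem_filter.mp (hxy ▸ hB : B ∈ S.filter (fun C => y ∈ C))).2
            have hyB' : y ∈ B' := (Finset.mem_filter.mp (hxy ▸ hB' : B' ∈ S.filter (fun C => y ∈ C))).2
            exact lin_pt hlin hSH hBS hBS' hBB hxB hxB' hyB hyB'
          calc offF.card ≤ (O.powersetCard 2).card :=
              Finset.card_le_card_of_injOn _ hinj hinj2
            _ = O.card.choose 2 := Finset.card_powersetCard _ _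
            _ ≤ Nat.choose 3 2 := Nat.choose_le_choose 2 hO3
            _ = 3 := by norm_num
        calc ∑ v ∈ offF, (d v - 1) ≤ ∑ _v ∈ offF, 1 := Finset.sum_le_sum hterms
          _ = offF.card := by simp
          _ ≤ 3 := hcard
    -- combine
    have hd7 : d v0 ≤ 7 := by
      rw [hdL0]; omega
    have := Finset.sum_le_sum hcross1
    omega
  -- ================= CASE II : all degrees ≤ 3 =================
  · push_neg at hbig
    -- degree identity: number of neighbours of A = sum over its W-vertices of (d v - 1)
    have degid : ∀ A ∈ S, (S.filter fun B => B ≠ A ∧ (A ∩ B).Nonempty).card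
        = ∑ v ∈ W.filter (fun v => v ∈ A), (d v - 1) := by
      intro A hA
      have hbij : (S.filter fun B => B ≠ A ∧ (A ∩ B).Nonempty)
          = (W.filter (fun v => v ∈ A)).biUnion
              (fun v => (S.filter (fun B => v ∈ B)).erase A) := by
        ext B
        simp only [Finset.mem_filter, Finset.mem_biUnion, Finset.mem_erase]
        constructor
        · rintro ⟨hBS, hBA, x, hx⟩
          rw [Finset.mem_inter] at hx
          exact ⟨x, ⟨memW hA hBS (Ne.symm hBA) hx.1 hx.2, hx.1⟩, hBA, hBS, hx.2⟩
        · rintro ⟨v, ⟨hvW, hvA⟩, hBA, hBS, hvB⟩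
          exact ⟨hBS, hBA, v, Finset.mem_inter.mpr ⟨hvA, hvB⟩⟩
      rw [hbij, Finset.card_biUnion]
      · refine Finset.sum_congr rfl ?_
        intro v hv
        rw [Finset.card_erase_of_mem]
        exact Finset.mem_filter.mpr ⟨hA, (Finset.mem_filter.mp hv).2⟩
      · intro x hx y hy hxy
        simp only [Finset.disjoint_left]
        intro B hBx hBy
        have h1x := Finset.mem_erase.mp hBx
        have h2y := Finset.mem_erase.mp hBy
        have hBA : B ≠ A := h1x.1
        have hBS : B ∈ S := (Finset.mem_filter.mp h1x.2).1
        have hxB : x ∈ B := (Finset.mem_filter.mp h1x.2).2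
        have hyB : y ∈ B := (Finset.mem_filter.mp h2y.2).2
        exact hxy (lin_pt hlin hSH hA hBS (Ne.symm hBA)
          (Finset.mem_filter.mp hx).2 hxB (Finset.mem_filter.mp hy).2 hyB)
    -- there is a hyperedge with at least 4 neighbours
    have hA0ex : ∃ A ∈ S, 4 ≤ (S.filter fun B => B ≠ A ∧ (A ∩ B).Nonempty).card := by
      by_contra hno
      push_neg at hno
      have h21 : ∑ A ∈ S, (S.filter fun B => B ≠ A ∧ (A ∩ B).Nonempty).card ≤ 21 := by
        calc ∑ A ∈ S, (S.filter fun B => B ≠ A ∧ (A ∩ B).Nonempty).card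
            ≤ ∑ _A ∈ S, 3 := Finset.sum_le_sum (fun A hA => by have := hno A hA; omega)
          _ = 21 := by rw [Finset.sum_const, hS7]; rfl
      have hswap : ∑ A ∈ S, (S.filter fun B => B ≠ A ∧ (A ∩ B).Nonempty).card
          = ∑ v ∈ W, (d v - 1) * d v := by
        rw [Finset.sum_congr rfl degid]
        have h1 : ∀ A ∈ S, ∑ v ∈ W.filter (fun v => v ∈ A), (d v - 1)
            = ∑ v ∈ W, if v ∈ A then d v - 1 else 0 := fun A _ => Finset.sum_filter _ _
        rw [Finset.sum_congr rfl h1, Finset.sum_comm]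
        refine Finset.sum_congr rfl ?_
        intro v hv
        rw [← Finset.sum_filter, Finset.sum_const, smul_eq_mul]
        exact mul_comm _ _
      have h22 : 22 ≤ ∑ v ∈ W, (d v - 1) * d v := by
        have e1 : 2 * ∑ v ∈ W, (d v - 1) = ∑ v ∈ W, (d v - 1) * 2 := by
          rw [Finset.mul_sum]
          exact Finset.sum_congr rfl (fun v _ => mul_comm _ _)
        have e2 : ∑ v ∈ W, (d v - 1) * 2 ≤ ∑ v ∈ W, (d v - 1) * d v :=
          Finset.sum_le_sum (fun v hv => Nat.mul_le_mul_left _ ((Finset.mem_filter.mp hv).2))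
        omega
      omega
    obtain ⟨A0, hA0S, hD4⟩ := hA0ex
    set N := S.filter (fun B => B ≠ A0 ∧ (A0 ∩ B).Nonempty) with hNdef
    have hNsub : N ⊆ S.erase A0 := by
      intro B hB
      exact Finset.mem_erase.mpr ⟨(Finset.mem_filter.mp hB).2.1, (Finset.mem_filter.mp hB).1⟩
    have hcard_erase : (S.erase A0).card = 6 := by
      rw [Finset.card_erase_of_mem hA0S, hS7]
    have hD6 : N.card ≤ 6 := hcard_erase ▸ Finset.card_le_card hNsub
    set T := (S.erase A0) \ N with hTdef
    have hTcard : T.card = 6 - N.card := by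
      rw [hTdef, Finset.card_sdiff_of_subset hNsub, hcard_erase]
    have hTS : ∀ B ∈ T, B ∈ S := fun B hB =>
      Finset.mem_of_mem_erase (Finset.mem_sdiff.mp hB).1
    have hTA0 : ∀ B ∈ T, B ≠ A0 := fun B hB =>
      (Finset.mem_erase.mp (Finset.mem_sdiff.mp hB).1).1
    have hTN : ∀ B ∈ T, B ∉ N := fun B hB => (Finset.mem_sdiff.mp hB).2
    have hTdisj : ∀ B ∈ T, ∀ u, u ∈ A0 → u ∈ B → False := by
      intro B hB u huA huB
      exact hTN B hB (Finset.mem_filter.mpr ⟨hTS B hB, hTA0 B hB, ⟨u, Finset.mem_inter.mpr ⟨huA, huB⟩⟩⟩)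
    -- split the weight sum
    have hsplitv : ∑ v ∈ W, (d v - 1) =
        ∑ v ∈ W.filter (fun v => v ∈ A0), (d v - 1) +
        ∑ v ∈ W.filter (fun v => v ∉ A0), (d v - 1) :=
      (Finset.sum_filter_add_sum_filter_not _ _ _).symm
    set out := W.filter (fun v => v ∉ A0) with houtdef
    have hDeq : ∑ v ∈ W.filter (fun v => v ∈ A0), (d v - 1) = N.card := (degid A0 hA0S).symm
    -- each out vertex lies in at most one member of N
    have keyN : ∀ v ∈ out, (N.filter (fun B => v ∈ B)).card ≤ 1 := by
      intro v hv
      obtain ⟨hvW, hvA0⟩ := Finset.mem_filter.mp hv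
      refine Finset.card_le_one.mpr ?_
      intro B hB B' hB'
      obtain ⟨hBN, hvB⟩ := Finset.mem_filter.mp hB
      obtain ⟨hBN', hvB'⟩ := Finset.mem_filter.mp hB'
      by_contra hne
      obtain ⟨hBS, hBA0, x, hx⟩ := Finset.mem_filter.mp hBN
      obtain ⟨hBS', hBA0', x', hx'⟩ := Finset.mem_filter.mp hBN'
      rw [Finset.mem_inter] at hx hx'
      obtain ⟨u, huA0, huB, huB'⟩ := tri_common hpart h3 hSH hA0S hBS hBS'
        (Ne.symm hBA0) hne (Ne.symm hBA0') hx.1 hx.2 hvB hvB' hx'.1 hx'.2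
      have : u = v := lin_pt hlin hSH hBS hBS' hne huB huB' hvB hvB'
      exact hvA0 (this ▸ huA0)
    have decomp : ∀ v ∈ out, d v = (N.filter (fun B => v ∈ B)).card
        + (T.filter (fun B => v ∈ B)).card := by
      intro v hv
      obtain ⟨hvW, hvA0⟩ := Finset.mem_filter.mp hv
      have hun : S.filter (fun B => v ∈ B) =
          N.filter (fun B => v ∈ B) ∪ T.filter (fun B => v ∈ B) := by
        ext C
        simp only [Finset.mem_filter, Finset.mem_union]
        constructor
        · rintro ⟨hCS, hvC⟩
          have hCA0 : C ≠ A0 := fun h => hvA0 (h ▸ hvC)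
          by_cases hCN : C ∈ N
          · exact Or.inl ⟨hCN, hvC⟩
          · exact Or.inr ⟨Finset.mem_sdiff.mpr ⟨Finset.mem_erase.mpr ⟨hCA0, hCS⟩, hCN⟩, hvC⟩
        · rintro (⟨hCN, hvC⟩ | ⟨hCT, hvC⟩)
          · exact ⟨(Finset.mem_filter.mp hCN).1, hvC⟩
          · exact ⟨hTS C hCT, hvC⟩
      have hdisj : Disjoint (N.filter (fun B => v ∈ B)) (T.filter (fun B => v ∈ B)) := by
        rw [Finset.disjoint_left]
        intro C hC hC'
        exact hTN C (Finset.mem_filter.mp hC').1 (Finset.mem_filter.mp hC).1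
      show (S.filter (fun B => v ∈ B)).card = _
      rw [hun, Finset.card_union_of_disjoint hdisj]
    -- helper: bounded covering of out-vertices lying in some Z and some member of N
    have hcodegT : ∀ Z ∈ T,
        (S.filter (fun B => B ≠ A0 ∧ B ≠ Z ∧ (A0 ∩ B).Nonempty ∧ (Z ∩ B).Nonempty)).card ≤ 3 := by
      intro Z hZT
      exact codeg_le hpart hlin h3 h4 hSH hA0S (hTS Z hZT) (Ne.symm (hTA0 Z hZT))
        (fun u hu1 hu2 => hTdisj Z hZT u hu1 hu2)
    have cover : ∀ Z ∈ T, ∀ (s : Finset V), (∀ v ∈ s, v ∈ Z ∧ ∃ B ∈ N, v ∈ B) →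
        s.card ≤ (S.filter (fun B => B ≠ A0 ∧ B ≠ Z ∧ (A0 ∩ B).Nonempty ∧ (Z ∩ B).Nonempty)).card := by
      intro Z hZT s hs
      have hZS : Z ∈ S := hTS Z hZT
      have hZA0 : Z ≠ A0 := hTA0 Z hZT
      set R := S.filter (fun B => B ≠ A0 ∧ B ≠ Z ∧ (A0 ∩ B).Nonempty ∧ (Z ∩ B).Nonempty)
        with hRdef
      have hcov : s ⊆ R.biUnion (fun B => s.filter (fun v => v ∈ B)) := by
        intro v hv
        obtain ⟨hvZ, B, hBN, hvB⟩ := hs v hv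
        obtain ⟨hBS, hBA0, hBnon⟩ := Finset.mem_filter.mp hBN
        have hBZ : B ≠ Z := fun h => hTN Z hZT (h ▸ hBN)
        refine Finset.mem_biUnion.mpr ⟨B, ?_, Finset.mem_filter.mpr ⟨hv, hvB⟩⟩
        exact Finset.mem_filter.mpr ⟨hBS, hBA0, hBZ, hBnon, ⟨v, Finset.mem_inter.mpr ⟨hvZ, hvB⟩⟩⟩
      calc s.card ≤ (R.biUnion (fun B => s.filter (fun v => v ∈ B))).card :=
          Finset.card_le_card hcov
        _ ≤ ∑ B ∈ R, (s.filter (fun v => v ∈ B)).card := Finset.card_biUnion_le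
        _ ≤ ∑ _B ∈ R, 1 := by
            refine Finset.sum_le_sum ?_
            intro B hB
            obtain ⟨hBS, hBA0, hBZ, hBnon, hZBnon⟩ := Finset.mem_filter.mp hB
            refine Finset.card_le_one.mpr ?_
            intro x hx y hy
            obtain ⟨hxs, hxB⟩ := Finset.mem_filter.mp hx
            obtain ⟨hys, hyB⟩ := Finset.mem_filter.mp hy
            exact lin_pt hlin hSH hZS hBS (Ne.symm hBZ) (hs x hxs).1 hxB (hs y hys).1 hyB
        _ = R.card := by simp
    -- now split on the number of neighbours of A0
    have hNO : N.card = 4 ∨ N.card = 5 ∨ N.card = 6 := by omega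
    have houtW : ∀ v ∈ out, 2 ≤ d v := fun v hv =>
      (Finset.mem_filter.mp (Finset.mem_filter.mp hv).1).2
    have hTfle : ∀ v, (T.filter (fun B => v ∈ B)).card ≤ T.card :=
      fun v => Finset.card_le_card (Finset.filter_subset _ _)
    rcases hNO with hN4 | hN5 | hN6
    -- ---------- N.card = 4 ----------
    · obtain ⟨Z1, Z2, hZne, hZpair⟩ := Finset.card_eq_two.mp (by omega : T.card = 2)
      have hZ1T : Z1 ∈ T := by rw [hZpair]; exact Finset.mem_insert_self _ _
      have hZ2T : Z2 ∈ T := by rw [hZpair]; simp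
      have tfeq : ∀ v : V, (T.filter (fun B => v ∈ B)).card =
          (if v ∈ Z1 then 1 else 0) + (if v ∈ Z2 then 1 else 0) := by
        intro v
        rw [hZpair]
        by_cases h1 : v ∈ Z1 <;> by_cases h2 : v ∈ Z2 <;>
          simp [Finset.filter_insert, Finset.filter_singleton, h1, h2, hZne]
      set q : V → Prop := fun v => ∃ B ∈ N, v ∈ B with hq
      have hsum_out : ∑ v ∈ out, (d v - 1) =
          ∑ v ∈ out.filter q, (d v - 1) + ∑ v ∈ out.filter (fun v => ¬ q v), (d v - 1) :=
        (Finset.sum_filter_add_sum_filter_not _ _ _).symm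
      -- type i : no neighbour of A0 through v
      have htypei : ∀ v ∈ out.filter (fun v => ¬ q v), v ∈ Z1 ∧ v ∈ Z2 ∧ d v = 2 := by
        intro v hv
        obtain ⟨hvout, hvq⟩ := Finset.mem_filter.mp hv
        have hNf : (N.filter (fun B => v ∈ B)).card = 0 := by
          rw [Finset.card_eq_zero, Finset.filter_eq_empty_iff]
          intro B hB hvB
          exact hvq ⟨B, hB, hvB⟩
        have hdv := decomp v hvout
        have h2v := houtW v hvout
        have htf := tfeq v
        by_cases h1 : v ∈ Z1 <;> by_cases h2 : v ∈ Z2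
        · exact ⟨h1, h2, by rw [if_pos h1, if_pos h2] at htf; omega⟩
        · exfalso; rw [if_pos h1, if_neg h2] at htf; omega
        · exfalso; rw [if_neg h1, if_pos h2] at htf; omega
        · exfalso; rw [if_neg h1, if_neg h2] at htf; omega
      have htypei1 : (out.filter (fun v => ¬ q v)).card ≤ 1 := by
        refine Finset.card_le_one.mpr ?_
        intro x hx y hy
        obtain ⟨hx1, hx2, _⟩ := htypei x hx
        obtain ⟨hy1, hy2, _⟩ := htypei y hy
        exact lin_pt hlin hSH (hTS Z1 hZ1T) (hTS Z2 hZ2T) hZne hx1 hx2 hy1 hy2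
      have hsum_typei : ∑ v ∈ out.filter (fun v => ¬ q v), (d v - 1) ≤ 1 := by
        calc ∑ v ∈ out.filter (fun v => ¬ q v), (d v - 1)
            ≤ ∑ _v ∈ out.filter (fun v => ¬ q v), 1 := by
              refine Finset.sum_le_sum ?_
              intro v hv
              have := (htypei v hv).2.2
              omega
          _ = (out.filter (fun v => ¬ q v)).card := by simp
          _ ≤ 1 := htypei1
      -- type ii
      have htypeii : ∀ v ∈ out.filter q, d v - 1 ≤
          (if v ∈ Z1 then 1 else 0) + (if v ∈ Z2 then 1 else 0) := by
        intro v hv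
        obtain ⟨hvout, hvq⟩ := Finset.mem_filter.mp hv
        have hdv := decomp v hvout
        have hNf := keyN v hvout
        have htf := tfeq v
        omega
      set b1 := ((out.filter q).filter (fun v => v ∈ Z1)).card with hb1def
      set b2 := ((out.filter q).filter (fun v => v ∈ Z2)).card with hb2def
      have hsum_typeii : ∑ v ∈ out.filter q, (d v - 1) ≤ b1 + b2 := by
        calc ∑ v ∈ out.filter q, (d v - 1)
            ≤ ∑ v ∈ out.filter q, ((if v ∈ Z1 then 1 else 0) + (if v ∈ Z2 then 1 else 0)) :=
              Finset.sum_le_sum htypeii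
          _ = b1 + b2 := by
              rw [Finset.sum_add_distrib, hb1def, hb2def, Finset.card_filter,
                Finset.card_filter]
      -- bounds on b1 b2 via covering
      have hcovmem : ∀ k : Finset V, k ∈ ({Z1, Z2} : Finset (Finset V)) → True := fun _ _ => trivial
      have hb1R : b1 ≤ (S.filter (fun B => B ≠ A0 ∧ B ≠ Z1 ∧ (A0 ∩ B).Nonempty ∧
          (Z1 ∩ B).Nonempty)).card := by
        refine cover Z1 hZ1T _ ?_
        intro v hv
        obtain ⟨hv1, hv2⟩ := Finset.mem_filter.mp hv
        exact ⟨hv2, (Finset.mem_filter.mp hv1).2⟩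
      have hb2R : b2 ≤ (S.filter (fun B => B ≠ A0 ∧ B ≠ Z2 ∧ (A0 ∩ B).Nonempty ∧
          (Z2 ∩ B).Nonempty)).card := by
        refine cover Z2 hZ2T _ ?_
        intro v hv
        obtain ⟨hv1, hv2⟩ := Finset.mem_filter.mp hv
        exact ⟨hv2, (Finset.mem_filter.mp hv1).2⟩
      have hR1c := hcodegT Z1 hZ1T
      have hR2c := hcodegT Z2 hZ2T
      -- forcing equality
      have hforce : (out.filter (fun v => ¬ q v)).Nonempty ∧
          3 ≤ (S.filter (fun B => B ≠ A0 ∧ B ≠ Z1 ∧ (A0 ∩ B).Nonempty ∧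
            (Z1 ∩ B).Nonempty)).card ∧
          3 ≤ (S.filter (fun B => B ≠ A0 ∧ B ≠ Z2 ∧ (A0 ∩ B).Nonempty ∧
            (Z2 ∩ B).Nonempty)).card := by
        refine ⟨?_, by omega, by omega⟩
        rw [← Finset.card_pos]
        by_contra hc
        have : (out.filter (fun v => ¬ q v)).card = 0 := by omega
        rw [Finset.card_eq_zero] at this
        rw [this, Finset.sum_empty] at hsum_out
        omega
      obtain ⟨⟨v12, hv12⟩, hR13, hR23⟩ := hforce
      -- the two codegree sets sit inside N and have a common element
      set R1 := S.filter (fun B => B ≠ A0 ∧ B ≠ Z1 ∧ (A0 ∩ B).Nonempty ∧ (Z1 ∩ B).Nonempty)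
      set R2 := S.filter (fun B => B ≠ A0 ∧ B ≠ Z2 ∧ (A0 ∩ B).Nonempty ∧ (Z2 ∩ B).Nonempty)
      have hR1N : R1 ⊆ N := by
        intro B hB
        obtain ⟨hBS, hBA0, _, hBn, _⟩ := Finset.mem_filter.mp hB
        exact Finset.mem_filter.mpr ⟨hBS, hBA0, hBn⟩
      have hR2N : R2 ⊆ N := by
        intro B hB
        obtain ⟨hBS, hBA0, _, hBn, _⟩ := Finset.mem_filter.mp hB
        exact Finset.mem_filter.mpr ⟨hBS, hBA0, hBn⟩
      have hUcard : (R1 ∪ R2).card ≤ 4 := by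
        rw [← hN4]
        exact Finset.card_le_card (Finset.union_subset hR1N hR2N)
      have hIcard : 1 ≤ (R1 ∩ R2).card := by
        have := Finset.card_union_add_card_inter R1 R2
        omega
      obtain ⟨Bs, hBs⟩ := Finset.card_pos.mp (by omega : 0 < (R1 ∩ R2).card)
      obtain ⟨hBs1, hBs2⟩ := Finset.mem_inter.mp hBs
      obtain ⟨hBsS, hBsA0, hBsZ1, _, hZ1Bs⟩ := Finset.mem_filter.mp hBs1
      obtain ⟨_, _, hBsZ2, _, hZ2Bs⟩ := Finset.mem_filter.mp hBs2
      -- v12 lies in Z1 ∩ Z2 and in no member of N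
      obtain ⟨hv12Z1, hv12Z2, _⟩ := htypei v12 hv12
      have hv12nq : ¬ q v12 := (Finset.mem_filter.mp hv12).2
      -- but Z1, Z2, Bs pairwise intersect, so they share a point, which must be v12
      obtain ⟨x1, hx1⟩ := hZ1Bs
      obtain ⟨x2, hx2⟩ := hZ2Bs
      rw [Finset.mem_inter] at hx1 hx2
      obtain ⟨u, huZ1, huZ2, huBs⟩ := tri_common hpart h3 hSH (hTS Z1 hZ1T) (hTS Z2 hZ2T)
        hBsS hZne (Ne.symm hBsZ2) (Ne.symm hBsZ1) hv12Z1 hv12Z2 hx2.1 hx2.2 hx1.1 hx1.2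
      have huv : u = v12 := lin_pt hlin hSH (hTS Z1 hZ1T) (hTS Z2 hZ2T) hZne
        huZ1 huZ2 hv12Z1 hv12Z2
      exact hv12nq ⟨Bs, hR1N hBs1, huv ▸ huBs⟩
    -- ---------- N.card = 5 ----------
    · obtain ⟨Z, hZsing⟩ := Finset.card_eq_one.mp (by omega : T.card = 1)
      have hZT : Z ∈ T := by rw [hZsing]; exact Finset.mem_singleton_self _
      have houts : ∀ v ∈ out, v ∈ Z ∧ ∃ B ∈ N, v ∈ B := by
        intro v hv
        have h2v := houtW v hv
        have hdv := decomp v hv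
        have hNf := keyN v hv
        have hTf : (T.filter (fun B => v ∈ B)).card ≤ 1 := by
          have := hTfle v
          omega
        have hNf1 : (N.filter (fun B => v ∈ B)).card = 1 := by omega
        have hTf1 : (T.filter (fun B => v ∈ B)).card = 1 := by omega
        obtain ⟨B, hB⟩ := Finset.card_pos.mp (by omega : 0 < (N.filter (fun B => v ∈ B)).card)
        obtain ⟨C, hC⟩ := Finset.card_pos.mp (by omega : 0 < (T.filter (fun B => v ∈ B)).card)
        obtain ⟨hCT, hvC⟩ := Finset.mem_filter.mp hC
        have hCZ : C = Z := by
          rw [hZsing] at hCT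
          exact Finset.mem_singleton.mp hCT
        exact ⟨hCZ ▸ hvC, B, (Finset.mem_filter.mp hB).1, (Finset.mem_filter.mp hB).2⟩
      have houtcard : out.card ≤ 3 :=
        le_trans (cover Z hZT out houts) (hcodegT Z hZT)
      have hsum_le : ∑ v ∈ out, (d v - 1) ≤ 3 := by
        calc ∑ v ∈ out, (d v - 1) ≤ ∑ _v ∈ out, 1 := by
              refine Finset.sum_le_sum ?_
              intro v hv
              have hdv := decomp v hv
              have hNf := keyN v hv
              have hTf := hTfle v
              omega
          _ = out.card := by simp
          _ ≤ 3 := houtcard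
      omega
    -- ---------- N.card = 6 ----------
    · have hT0 : T = ∅ := Finset.card_eq_zero.mp (by omega)
      have hout0 : ∑ v ∈ out, (d v - 1) = 0 := by
        refine Finset.sum_eq_zero ?_
        intro v hv
        have h2v := houtW v hv
        have hdv := decomp v hv
        have hNf := keyN v hv
        have hTf : (T.filter (fun B => v ∈ B)).card = 0 := by
          rw [hT0]
          simp
        omega
      omega


end Main

theorem gfree7_of_no_rainbow {V : Type*} [DecidableEq V] (r : ℕ) (hr : 3 ≤ r)
    (H : Finset (Finset V)) (part : V → Fin r)
    (hpart : ∀ A ∈ H, ∀ i : Fin r, (A.filter fun x => part x = i).card = 1)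
    (hlin : ∀ A ∈ H, ∀ B ∈ H, A ≠ B → (A ∩ B).card ≤ 1)
    (h3 : ¬ HasRainbowCycle H part 3) (h4 : ¬ HasRainbowCycle H part 4) :
    GFree H (7 * r - 11) 7 := by
  intro S hSH hS7
  classical
  have hbound := main_bound hpart hlin h3 h4 hSH hS7
  have hAcard : ∀ A ∈ S, A.card = r := by
    intro A hA
    rw [Finset.card_eq_sum_card_fiberwise (f := part) (t := Finset.univ)
      (fun x _ => Finset.mem_univ _)]
    rw [Finset.sum_congr rfl (fun i _ => hpart A (hSH hA) i)]
    simp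
  set U := S.biUnion id with hU
  have hsub : ∀ A ∈ S, A ⊆ U := fun A hA x hx => Finset.mem_biUnion.mpr ⟨A, hA, hx⟩
  have hsum1 : ∑ v ∈ U, (S.filter (fun A => v ∈ A)).card = 7 * r := by
    have h1 : ∀ v ∈ U, (S.filter (fun A => v ∈ A)).card
        = ∑ A ∈ S, if v ∈ A then 1 else 0 := fun v _ => Finset.card_filter _ _
    rw [Finset.sum_congr rfl h1, Finset.sum_comm]
    have h2 : ∀ A ∈ S, (∑ v ∈ U, if v ∈ A then 1 else 0) = A.card := by
      intro A hA
      rw [← Finset.card_filter]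
      have h3' : U.filter (fun v => v ∈ A) = A := by
        ext x
        simp only [Finset.mem_filter]
        exact ⟨fun h => h.2, fun h => ⟨hsub A hA h, h⟩⟩
      rw [h3']
    rw [Finset.sum_congr rfl h2, Finset.sum_congr rfl hAcard, Finset.sum_const, hS7,
      smul_eq_mul]
  have hge1 : ∀ v ∈ U, 1 ≤ (S.filter (fun A => v ∈ A)).card := by
    intro v hv
    obtain ⟨A, hA, hvA⟩ := Finset.mem_biUnion.mp hv
    exact Finset.card_pos.mpr ⟨A, Finset.mem_filter.mpr ⟨hA, hvA⟩⟩
  have hsplit : ∑ v ∈ U, (S.filter (fun A => v ∈ A)).card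
      = U.card + ∑ v ∈ U, ((S.filter (fun A => v ∈ A)).card - 1) := by
    calc ∑ v ∈ U, (S.filter (fun A => v ∈ A)).card
        = ∑ v ∈ U, (1 + ((S.filter (fun A => v ∈ A)).card - 1)) :=
          Finset.sum_congr rfl (fun v hv => by have := hge1 v hv; omega)
      _ = ∑ _v ∈ U, 1 + ∑ v ∈ U, ((S.filter (fun A => v ∈ A)).card - 1) :=
          Finset.sum_add_distrib
      _ = U.card + ∑ v ∈ U, ((S.filter (fun A => v ∈ A)).card - 1) := by
          rw [Finset.sum_const, smul_eq_mul, mul_one]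
  have hr7 : 21 ≤ 7 * r := by omega
  show 7 * r - 11 + 1 ≤ U.card
  omega
end

section
/- Let r ≥ 3 and let H be an r-uniform r-partite linear hypergraph containing no rainbow cycles of length three or four. If A_1, …, A_6 are six distinct edges of H with |A_1 ∪ ⋯ ∪ A_6| ≤ 6r−9, then for every edge A_7 of H distinct from A_1, …, A_6 one has |A_7 ∩ (A_1 ∪ ⋯ ∪ A_6)| ≤ 1. -/
open Finset

lemma rainbow3 {V : Type*} {r : ℕ} {H : Finset (Finset V)} {part : V → Fin r}
    (h3 : ¬ HasRainbowCycle H part 3)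
    {E0 E1 E2 : Finset V} (hE0 : E0 ∈ H) (hE1 : E1 ∈ H) (hE2 : E2 ∈ H)
    (e01 : E0 ≠ E1) (e02 : E0 ≠ E2) (e12 : E1 ≠ E2)
    {u0 u1 u2 : V}
    (p01 : part u0 ≠ part u1) (p02 : part u0 ≠ part u2) (p12 : part u1 ≠ part u2)
    (m00 : u0 ∈ E0) (m10 : u1 ∈ E0) (m11 : u1 ∈ E1) (m21 : u2 ∈ E1)
    (m22 : u2 ∈ E2) (m02 : u0 ∈ E2) : False := by
  apply h3
  refine ⟨![u0, u1, u2], ![E0, E1, E2], ?_, ?_, ?_, ?_, ?_⟩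
  · have hp : Function.Injective (fun i => part (![u0, u1, u2] i)) := by
      intro i j h
      fin_cases i <;> fin_cases j <;> simp_all
    exact Function.Injective.of_comp hp
  · intro i j h; fin_cases i <;> fin_cases j <;> simp_all
  · intro i; fin_cases i <;> simp_all
  · intro i; fin_cases i <;> exact ⟨by simp_all, by simp_all⟩
  · intro i j h; fin_cases i <;> fin_cases j <;> simp_all

lemma rainbow4 {V : Type*} {r : ℕ} {H : Finset (Finset V)} {part : V → Fin r}
    (h4 : ¬ HasRainbowCycle H part 4)
    {E0 E1 E2 E3 : Finset V} (hE0 : E0 ∈ H) (hE1 : E1 ∈ H) (hE2 : E2 ∈ H) (hE3 : E3 ∈ H)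
    (e01 : E0 ≠ E1) (e02 : E0 ≠ E2) (e03 : E0 ≠ E3)
    (e12 : E1 ≠ E2) (e13 : E1 ≠ E3) (e23 : E2 ≠ E3)
    {u0 u1 u2 u3 : V}
    (p01 : part u0 ≠ part u1) (p02 : part u0 ≠ part u2) (p03 : part u0 ≠ part u3)
    (p12 : part u1 ≠ part u2) (p13 : part u1 ≠ part u3) (p23 : part u2 ≠ part u3)
    (m00 : u0 ∈ E0) (m10 : u1 ∈ E0) (m11 : u1 ∈ E1) (m21 : u2 ∈ E1)
    (m22 : u2 ∈ E2) (m32 : u3 ∈ E2) (m33 : u3 ∈ E3) (m03 : u0 ∈ E3) : False := by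
  apply h4
  refine ⟨![u0, u1, u2, u3], ![E0, E1, E2, E3], ?_, ?_, ?_, ?_, ?_⟩
  · have hp : Function.Injective (fun i => part (![u0, u1, u2, u3] i)) := by
      intro i j h
      fin_cases i <;> fin_cases j <;> simp_all
    exact Function.Injective.of_comp hp
  · intro i j h; fin_cases i <;> fin_cases j <;> simp_all
  · intro i; fin_cases i <;> simp_all
  · intro i; fin_cases i <;> exact ⟨by simp_all, by simp_all⟩
  · intro i j h; fin_cases i <;> fin_cases j <;> simp_all

/-- Structural lemma: the six edges form a `K_{3,3}` intersection pattern. -/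
lemma k33_structure {V : Type*} [DecidableEq V] {r : ℕ} (hr : 3 ≤ r)
    {H : Finset (Finset V)} {part : V → Fin r}
    (hpart : ∀ A ∈ H, ∀ i : Fin r, (A.filter fun x => part x = i).card = 1)
    (hlin : ∀ A ∈ H, ∀ B ∈ H, A ≠ B → (A ∩ B).card ≤ 1)
    (h3 : ¬ HasRainbowCycle H part 3)
    (A : Fin 6 → Finset V) (hA : ∀ i, A i ∈ H) (hinj : Function.Injective A)
    (hcard : #((univ : Finset (Fin 6)).biUnion A) ≤ 6 * r - 9) :
    ∃ side : Fin 6 → Bool,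
      (∀ a b : Fin 6, a ≠ b → ∀ z, z ∈ A a → z ∈ A b → side a ≠ side b) ∧
      (∀ a b : Fin 6, side a ≠ side b → (A a ∩ A b).Nonempty) ∧
      (∀ s : Bool, #(univ.filter fun a => side a = s) = 3) := by
  classical
  -- parts distinct within an edge
  have hpd : ∀ C ∈ H, ∀ x ∈ C, ∀ y ∈ C, x ≠ y → part x ≠ part y := by
    intro C hC x hx y hy hxy hpxy
    have h1 := hpart C hC (part x)
    have h2 : 1 < #(C.filter fun z => part z = part x) :=
      Finset.one_lt_card.2 ⟨x, mem_filter.2 ⟨hx, rfl⟩, y, mem_filter.2 ⟨hy, hpxy.symm⟩, hxy⟩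
    omega
  -- unique intersection point
  have hint : ∀ a b : Fin 6, a ≠ b → ∀ z w : V, z ∈ A a → z ∈ A b → w ∈ A a → w ∈ A b →
      z = w := by
    intro a b hab z w hza hzb hwa hwb
    by_contra hzw
    have h2 : 1 < #(A a ∩ A b) :=
      Finset.one_lt_card.2 ⟨z, mem_inter.2 ⟨hza, hzb⟩, w, mem_inter.2 ⟨hwa, hwb⟩, hzw⟩
    have h3' := hlin (A a) (hA a) (A b) (hA b) (fun h => hab (hinj h))
    omega
  -- no triangle on three distinct edges: witnesses coincide
  have l8 : ∀ a b c : Fin 6, a ≠ b → a ≠ c → b ≠ c → ∀ u v w : V,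
      u ∈ A a → u ∈ A b → v ∈ A b → v ∈ A c → w ∈ A a → w ∈ A c → u = v := by
    intro a b c hab hac hbc u v w hua hub hvb hvc hwa hwc
    by_cases huv : u = v
    · exact huv
    by_cases huw : u = w
    · exact (hint b c hbc v u hvb hvc hub (huw ▸ hwc)).symm
    by_cases hvw : v = w
    · exact hint a b hab u v hua hub (hvw ▸ hwa) hvb
    · exact absurd (rainbow3 h3 (hA b) (hA c) (hA a)
        (fun h => hbc (hinj h)) (fun h => hab (hinj h).symm) (fun h => hac (hinj h).symm)
        (hpd (A b) (hA b) u hub v hvb huv)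
        (hpd (A a) (hA a) u hua w hwa huw)
        (hpd (A c) (hA c) v hvc w hwc hvw)
        hub hvb hvc hwc hwa hua) (fun h => h)
  -- edge cards
  have hAcard : ∀ a : Fin 6, #(A a) = r := by
    intro a
    have h := Finset.card_eq_sum_card_fiberwise (f := part) (s := A a) (t := univ)
      (fun x _ => mem_univ _)
    rw [h]; simp [hpart (A a) (hA a)]
  set U := (univ : Finset (Fin 6)).biUnion A with hU
  set S : V → Finset (Fin 6) := fun z => univ.filter (fun a => z ∈ A a) with hS
  have hSmem : ∀ z a, a ∈ S z ↔ z ∈ A a := by intro z a; simp [hS]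
  have hUS : ∀ z, z ∈ U ↔ ∃ a, z ∈ A a := by intro z; simp [hU]
  -- total degree count
  have hsum : ∑ z ∈ U, #(S z) = 6 * r := by
    have h1 : ∀ z, #(S z) = ∑ a : Fin 6, if z ∈ A a then 1 else 0 := by
      intro z; rw [hS]; rw [Finset.card_filter]
    calc ∑ z ∈ U, #(S z) = ∑ z ∈ U, ∑ a : Fin 6, if z ∈ A a then 1 else 0 := by
          exact Finset.sum_congr rfl fun z _ => h1 z
      _ = ∑ a : Fin 6, ∑ z ∈ U, if z ∈ A a then 1 else 0 := Finset.sum_comm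
      _ = ∑ a : Fin 6, #(U.filter (· ∈ A a)) := by
          exact Finset.sum_congr rfl fun a _ => (Finset.card_filter _ _).symm
      _ = ∑ a : Fin 6, #(A a) := by
          refine Finset.sum_congr rfl fun a _ => ?_
          congr 1
          ext z
          simp only [mem_filter, hUS]
          exact ⟨fun h => h.2, fun h => ⟨⟨a, h⟩, h⟩⟩
      _ = ∑ _a : Fin 6, r := Finset.sum_congr rfl fun a _ => hAcard a
      _ = 6 * r := by simp [mul_comm]
  have hd1 : ∀ z ∈ U, 1 ≤ #(S z) := by
    intro z hz
    obtain ⟨a, ha⟩ := (hUS z).1 hz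
    exact Finset.card_pos.2 ⟨a, (hSmem z a).2 ha⟩
  have hexc : 9 ≤ ∑ z ∈ U, (#(S z) - 1) := by
    have h2 : ∑ z ∈ U, (#(S z) - 1) + #U = ∑ z ∈ U, #(S z) := by
      rw [Finset.card_eq_sum_ones U, ← Finset.sum_add_distrib]
      exact Finset.sum_congr rfl fun z hz => by have := hd1 z hz; omega
    have h6r : 18 ≤ 6 * r := by omega
    omega
  -- restrict to vertices of degree ≥ 2
  set W := U.filter (fun z => 2 ≤ #(S z)) with hW
  have hexcW : 9 ≤ ∑ z ∈ W, (#(S z) - 1) := by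
    have h0 : ∑ z ∈ U.filter (fun z => ¬ 2 ≤ #(S z)), (#(S z) - 1) = 0 := by
      refine Finset.sum_eq_zero fun z hz => ?_
      have hz' := mem_filter.1 hz
      have := hd1 z hz'.1
      omega
    have h1 : ∑ z ∈ W, (#(S z) - 1) +
        ∑ z ∈ U.filter (fun z => ¬ 2 ≤ #(S z)), (#(S z) - 1) = ∑ z ∈ U, (#(S z) - 1) :=
      Finset.sum_filter_add_sum_filter_not U (fun z => 2 ≤ #(S z)) (fun z => #(S z) - 1)
    omega
  -- the star pairs
  have hSne : ∀ z ∈ W, (S z).Nonempty := by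
    intro z hz
    have := (mem_filter.1 hz).2
    exact Finset.card_pos.1 (by omega)
  set rt : V → Fin 6 := fun z => if h : (S z).Nonempty then (S z).min' h else 0 with hrt
  have hrtmem : ∀ z ∈ W, rt z ∈ S z := by
    intro z hz
    rw [hrt]; simp only [dif_pos (hSne z hz)]
    exact Finset.min'_mem _ _
  have hrtmin : ∀ z ∈ W, ∀ a ∈ S z, rt z ≤ a := by
    intro z hz a ha
    rw [hrt]; simp only [dif_pos (hSne z hz)]
    exact Finset.min'_le _ _ ha
  set F : V → Finset (Fin 6 × Fin 6) :=
    fun z => ((S z).erase (rt z)).image (fun a => (rt z, a)) with hF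
  set T := W.biUnion F with hT
  have hFmem : ∀ z p, p ∈ F z ↔ (p.1 = rt z ∧ p.2 ∈ (S z).erase (rt z)) := by
    intro z p
    rw [hF]; simp only [Finset.mem_image]
    constructor
    · rintro ⟨a, ha, rfl⟩; exact ⟨rfl, ha⟩
    · rintro ⟨h1, h2⟩; exact ⟨p.2, h2, by rw [← h1]⟩
  have hTelem : ∀ p ∈ T, p.1 < p.2 ∧ ∃ z ∈ W, z ∈ A p.1 ∧ z ∈ A p.2 ∧ rt z = p.1 ∧
      p.2 ∈ S z := by
    intro p hp
    rw [hT, Finset.mem_biUnion] at hp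
    obtain ⟨z, hzW, hpz⟩ := hp
    obtain ⟨h1, h2⟩ := (hFmem z p).1 hpz
    have h3' := Finset.mem_erase.1 h2
    have hlt : p.1 < p.2 := by
      rw [h1]
      exact lt_of_le_of_ne (hrtmin z hzW p.2 h3'.2) (Ne.symm h3'.1)
    refine ⟨hlt, z, hzW, ?_, (hSmem z p.2).1 h3'.2, h1.symm, h3'.2⟩
    rw [h1]
    exact (hSmem z (rt z)).1 (hrtmem z hzW)
  have hTcard : 9 ≤ #T := by
    have hdisj : ∀ x ∈ W, ∀ y ∈ W, x ≠ y → Disjoint (F x) (F y) := by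
      intro x hx y hy hxy
      rw [Finset.disjoint_left]
      intro p hpx hpy
      obtain ⟨hx1, hx2⟩ := (hFmem x p).1 hpx
      obtain ⟨hy1, hy2⟩ := (hFmem y p).1 hpy
      have hx2' := Finset.mem_erase.1 hx2
      have hy2' := Finset.mem_erase.1 hy2
      have hne : p.1 ≠ p.2 := by rw [hx1]; exact (Ne.symm hx2'.1)
      refine hxy (hint p.1 p.2 hne x y ?_ ((hSmem x p.2).1 hx2'.2) ?_
        ((hSmem y p.2).1 hy2'.2))
      · rw [hx1]; exact (hSmem x (rt x)).1 (hrtmem x hx)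
      · rw [hy1]; exact (hSmem y (rt y)).1 (hrtmem y hy)
    have hFcard : ∀ z ∈ W, #(F z) = #(S z) - 1 := by
      intro z hz
      have hinjz : Function.Injective (fun a : Fin 6 => (rt z, a)) :=
        fun a b h => congrArg Prod.snd h
      rw [hF]
      simp only []
      rw [Finset.card_image_of_injective _ hinjz, Finset.card_erase_of_mem (hrtmem z hz)]
    calc (9 : ℕ) ≤ ∑ z ∈ W, (#(S z) - 1) := hexcW
      _ = ∑ z ∈ W, #(F z) := Finset.sum_congr rfl fun z hz => (hFcard z hz).symm
      _ = #T := by rw [hT, Finset.card_biUnion hdisj]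
  -- the auxiliary graph
  set G : SimpleGraph (Fin 6) :=
    { Adj := fun a b => (a, b) ∈ T ∨ (b, a) ∈ T
      symm := ⟨fun a b h => h.symm⟩
      loopless := ⟨fun a h => by
        rcases h with h | h <;> exact absurd (hTelem _ h).1 (lt_irrefl a)⟩ } with hG
  haveI : DecidableRel G.Adj := fun a b => by
    rw [hG]; exact inferInstanceAs (Decidable (_ ∨ _))
  have hGwit : ∀ a b, G.Adj a b → ∃ z, z ∈ A a ∧ z ∈ A b ∧ (rt z = a ∨ rt z = b) := by
    intro a b h
    rcases h with h | h
    · obtain ⟨_, z, _, h1, h2, h3'', _⟩ := hTelem _ h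
      exact ⟨z, h1, h2, Or.inl h3''⟩
    · obtain ⟨_, z, _, h1, h2, h3'', _⟩ := hTelem _ h
      exact ⟨z, h2, h1, Or.inr h3''⟩
  have hcf : G.CliqueFree 3 := by
    intro t ht
    obtain ⟨a, b, c, hab, hac, hbc, rfl⟩ := Finset.card_eq_three.1 ht.card_eq
    have hc := ht.isClique
    have h1 : G.Adj a b := hc (by simp) (by simp) hab
    have h2 : G.Adj b c := hc (by simp) (by simp) hbc
    have h3'' : G.Adj a c := hc (by simp) (by simp) hac
    obtain ⟨z1, hz1a, hz1b, hr1⟩ := hGwit a b h1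
    obtain ⟨z2, hz2b, hz2c, hr2⟩ := hGwit b c h2
    obtain ⟨z3, hz3a, hz3c, hr3⟩ := hGwit a c h3''
    have e12 : z1 = z2 := l8 a b c hab hac hbc z1 z2 z3 hz1a hz1b hz2b hz2c hz3a hz3c
    have e13 : z1 = z3 := hint a c hac z1 z3 hz1a (by rw [e12]; exact hz2c) hz3a hz3c
    rw [← e12] at hr2
    rw [← e13] at hr3
    rcases hr1 with h1' | h1'
    · rcases hr2 with h2' | h2'
      · exact hab (h1'.symm.trans h2')
      · exact hac (h1'.symm.trans h2')
    · rcases hr2 with h2' | h2'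
      · rcases hr3 with h3e | h3e
        · exact hab (h3e.symm.trans h1')
        · exact hbc (h1'.symm.trans h3e)
      · exact hbc (h1'.symm.trans h2')
  have hedge : #T = #G.edgeFinset := by
    apply Finset.card_bij (fun (p : Fin 6 × Fin 6) _ => Sym2.mk p.1 p.2)
    · intro p hp
      rw [SimpleGraph.mem_edgeFinset]
      exact (SimpleGraph.mem_edgeSet G).2 (Or.inl hp)
    · intro p hp q hq h
      have hp' := (hTelem p hp).1
      have hq' := (hTelem q hq).1
      rcases (Sym2.mk_eq_mk_iff).1 h with h' | h'
      · exact h'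
      · exfalso
        have h1 : p.1 = q.2 := congrArg Prod.fst h'
        have h2 : p.2 = q.1 := congrArg Prod.snd h'
        rw [h1, h2] at hp'
        exact absurd (hp'.trans hq') (lt_irrefl _)
    · intro e he
      rw [SimpleGraph.mem_edgeFinset] at he
      revert he
      refine Sym2.ind (fun a b he => ?_) e
      rcases (SimpleGraph.mem_edgeSet G).1 he with h | h
      · exact ⟨(a, b), h, rfl⟩
      · exact ⟨(b, a), h, Sym2.eq_swap⟩
  have h9 : 9 ≤ #G.edgeFinset := by rw [← hedge]; exact hTcard
  have ht9 : #(SimpleGraph.turanGraph 6 2).edgeFinset = 9 := by decide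
  have hGtm : G.IsTuranMaximal 2 := by
    refine ⟨hcf, fun H' _ cf => ?_⟩
    have h' := (SimpleGraph.isTuranMaximal_turanGraph (n := 6) (by norm_num : 0 < 2)).2 cf
    omega
  obtain ⟨f0⟩ := hGtm.nonempty_iso_turanGraph
  have f : G ≃g SimpleGraph.turanGraph 6 2 := f0
  set side : Fin 6 → Bool := fun a => decide ((f a : ℕ) % 2 = 0) with hside
  have hadj : ∀ a b, G.Adj a b ↔ side a ≠ side b := by
    intro a b
    rw [← f.map_adj_iff]
    have h2a := Nat.mod_two_eq_zero_or_one (f a : ℕ)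
    have h2b := Nat.mod_two_eq_zero_or_one (f b : ℕ)
    simp only [SimpleGraph.turanGraph_adj, hside]
    rcases h2a with h | h <;> rcases h2b with h' | h' <;> simp [h, h']
  have hclass : ∀ s : Bool, #(univ.filter fun a => side a = s) = 3 := by
    intro s
    have he : #(univ.filter fun a => side a = s)
        = #(univ.filter fun x : Fin 6 => decide ((x : ℕ) % 2 = 0) = s) := by
      apply Finset.card_bij' (fun a _ => f a) (fun b _ => f.symm b) <;>
        simp [hside]
    rw [he]
    cases s <;> decide
  refine ⟨side, ?_, ?_, hclass⟩
  · -- two edges through a common vertex lie on opposite sides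
    intro a b hab z hza hzb hss
    have hzU : z ∈ U := (hUS z).2 ⟨a, hza⟩
    have haS : a ∈ S z := (hSmem z a).2 hza
    have hbS : b ∈ S z := (hSmem z b).2 hzb
    have hzW : z ∈ W := by
      rw [hW, mem_filter]
      exact ⟨hzU, Finset.one_lt_card.2 ⟨a, haS, b, hbS, hab⟩⟩
    have hstar : ∀ c ∈ S z, c ≠ rt z → G.Adj (rt z) c := by
      intro c hc hcne
      left
      rw [hT, Finset.mem_biUnion]
      exact ⟨z, hzW, (hFmem z _).2 ⟨rfl, Finset.mem_erase.2 ⟨hcne, hc⟩⟩⟩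
    by_cases hta : rt z = a
    · have h' := (hadj _ b).1 (hstar b hbS (fun h => hab (h.trans hta).symm))
      rw [hta] at h'
      exact h' hss
    by_cases htb : rt z = b
    · have h' := (hadj _ a).1 (hstar a haS (fun h => hab (h.trans htb)))
      rw [htb] at h'
      exact h' hss.symm
    have hra := (hadj _ a).1 (hstar a haS (fun h => hta h.symm))
    have hrb := (hadj _ b).1 (hstar b hbS (fun h => htb h.symm))
    have h2 : 1 < #(univ.filter fun x => side x = side (rt z)) := by
      rw [hclass]; norm_num
    obtain ⟨c1, hc1, c2, hc2, hc12⟩ := Finset.one_lt_card.1 h2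
    have hc1' := (mem_filter.1 hc1).2
    have hc2' := (mem_filter.1 hc2).2
    set c := if c1 = rt z then c2 else c1 with hcdef
    have hcrt : c ≠ rt z := by
      rw [hcdef]; split_ifs with h
      · exact fun h' => hc12 (h.trans h'.symm)
      · exact h
    have hcside : side c = side (rt z) := by
      rw [hcdef]; split_ifs <;> assumption
    have hca : side c ≠ side a := by rw [hcside]; exact hra
    have hcb : side c ≠ side b := by rw [hcside]; exact hrb
    obtain ⟨w1, hw1c, hw1a, _⟩ := hGwit c a ((hadj c a).2 hca)
    obtain ⟨w2, hw2c, hw2b, _⟩ := hGwit c b ((hadj c b).2 hcb)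
    have hca' : c ≠ a := fun h => hca (by rw [h])
    have hcb' : c ≠ b := fun h => hcb (by rw [h])
    have hz2 : z = w2 :=
      l8 a b c hab (Ne.symm hca') (Ne.symm hcb') z w2 w1 hza hzb hw2b hw2c hw1a hw1c
    have hcS : c ∈ S z := (hSmem z c).2 (by rw [hz2]; exact hw2c)
    exact ((hadj _ c).1 (hstar c hcS hcrt)) hcside.symm
  · -- edges on opposite sides intersect
    intro a b hs
    obtain ⟨z, hz1, hz2, _⟩ := hGwit a b ((hadj a b).2 hs)
    exact ⟨z, mem_inter.2 ⟨hz1, hz2⟩⟩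
lemma bool_trichotomy (a b c : Bool) (h1 : a ≠ c) (h2 : b ≠ c) : a = b := by
  revert h1 h2; revert a b c; decide

theorem seventh_edge_small_intersection {V : Type*} [DecidableEq V] (r : ℕ) (hr : 3 ≤ r)
    (H : Finset (Finset V)) (part : V → Fin r)
    (hpart : ∀ A ∈ H, ∀ i : Fin r, (A.filter fun x => part x = i).card = 1)
    (hlin : ∀ A ∈ H, ∀ B ∈ H, A ≠ B → (A ∩ B).card ≤ 1)
    (h3 : ¬ HasRainbowCycle H part 3) (h4 : ¬ HasRainbowCycle H part 4)
    (A : Fin 6 → Finset V) (hA : ∀ i, A i ∈ H) (hinj : Function.Injective A)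
    (hcard : ((Finset.univ : Finset (Fin 6)).biUnion A).card ≤ 6 * r - 9) :
    ∀ B ∈ H, (∀ i, B ≠ A i) →
      (B ∩ (Finset.univ : Finset (Fin 6)).biUnion A).card ≤ 1 := by
  classical
  intro B hB hBne
  by_contra hcon
  have h2card : 1 < #(B ∩ (univ : Finset (Fin 6)).biUnion A) := by omega
  obtain ⟨x, hx, y, hy, hxy⟩ := Finset.one_lt_card.1 h2card
  have hxB : x ∈ B := (mem_inter.1 hx).1
  have hyB : y ∈ B := (mem_inter.1 hy).1
  have hxU := (mem_inter.1 hx).2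
  have hyU := (mem_inter.1 hy).2
  have hpd : ∀ C ∈ H, ∀ z ∈ C, ∀ z' ∈ C, z ≠ z' → part z ≠ part z' := by
    intro C hC z hz z' hz' hzz hpzz
    have h1 := hpart C hC (part z)
    have h2 : 1 < #(C.filter fun t => part t = part z) :=
      Finset.one_lt_card.2 ⟨z, mem_filter.2 ⟨hz, rfl⟩, z', mem_filter.2 ⟨hz', hpzz.symm⟩, hzz⟩
    omega
  have hBA : ∀ a : Fin 6, ¬ (x ∈ A a ∧ y ∈ A a) := by
    rintro a ⟨h1, h2⟩
    have hlt : 1 < #(B ∩ A a) :=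
      Finset.one_lt_card.2 ⟨x, mem_inter.2 ⟨hxB, h1⟩, y, mem_inter.2 ⟨hyB, h2⟩, hxy⟩
    have := hlin B hB (A a) (hA a) (hBne a)
    omega
  obtain ⟨i, _, hxi⟩ := Finset.mem_biUnion.1 hxU
  obtain ⟨j, _, hyj⟩ := Finset.mem_biUnion.1 hyU
  have hij : i ≠ j := fun h => hBA i ⟨hxi, h ▸ hyj⟩
  by_cases hcase : ∃ a b : Fin 6, x ∈ A a ∧ y ∈ A b ∧ (A a ∩ A b).Nonempty
  · obtain ⟨a, b, hxa, hyb, p, hp⟩ := hcase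
    have hab : a ≠ b := fun h => hBA a ⟨hxa, h ▸ hyb⟩
    have hpa : p ∈ A a := (mem_inter.1 hp).1
    have hpb : p ∈ A b := (mem_inter.1 hp).2
    have hpx : p ≠ x := fun h => hBA b ⟨h ▸ hpb, hyb⟩
    have hpy : p ≠ y := fun h => hBA a ⟨hxa, h ▸ hpa⟩
    exact rainbow3 h3 hB (hA b) (hA a) (hBne b) (hBne a)
      (fun h => hab (hinj h).symm)
      (hpd B hB x hxB y hyB hxy)
      (hpd (A a) (hA a) x hxa p hpa (Ne.symm hpx))
      (hpd (A b) (hA b) y hyb p hpb (Ne.symm hpy))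
      hxB hyB hyb hpb hpa hxa
  · simp only [not_exists, not_and] at hcase
    obtain ⟨side, hopp, hcross, hclass⟩ :=
      k33_structure hr hpart hlin h3 A hA hinj hcard
    have hsij : side i = side j := by
      by_contra hs
      exact hcase i j hxi hyj (hcross i j hs)
    set K := univ.filter (fun k => ¬ side k = side i) with hK
    have hKcard : #K = 3 := by
      have h1 := Finset.card_filter_add_card_filter_not
        (s := (univ : Finset (Fin 6))) (p := fun k => side k = side i)
      have h2 := hclass (side i)
      have h3' : #(univ : Finset (Fin 6)) = 6 := by decide
      rw [hK]
      omega
    have hwitu : ∀ k : Fin 6, ∃ z, (side k ≠ side i → z ∈ A i ∧ z ∈ A k) := by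
      intro k
      by_cases h : side k ≠ side i
      · obtain ⟨z, hz⟩ := hcross i k (Ne.symm h)
        exact ⟨z, fun _ => ⟨(mem_inter.1 hz).1, (mem_inter.1 hz).2⟩⟩
      · exact ⟨x, fun h' => absurd h' h⟩
    have hwitw : ∀ k : Fin 6, ∃ z, (side k ≠ side i → z ∈ A j ∧ z ∈ A k) := by
      intro k
      by_cases h : side k ≠ side i
      · obtain ⟨z, hz⟩ := hcross j k (fun h' => h (h'.symm.trans hsij.symm))
        exact ⟨z, fun _ => ⟨(mem_inter.1 hz).1, (mem_inter.1 hz).2⟩⟩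
      · exact ⟨x, fun h' => absurd h' h⟩
    choose u hu using hwitu
    choose w hw using hwitw
    have hKside : ∀ k ∈ K, side k ≠ side i := fun k hk => (mem_filter.1 hk).2
    have husame : ∀ k ∈ K, ∀ k' ∈ K, k ≠ k' → u k ≠ u k' := by
      intro k hk k' hk' hkk he
      have h1 := hu k (hKside k hk)
      have h2 := hu k' (hKside k' hk')
      exact hopp k k' hkk (u k) h1.2 (he ▸ h2.2)
        (bool_trichotomy _ _ _ (hKside k hk) (hKside k' hk'))
    have hwsame : ∀ k ∈ K, ∀ k' ∈ K, k ≠ k' → w k ≠ w k' := by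
      intro k hk k' hk' hkk he
      have h1 := hw k (hKside k hk)
      have h2 := hw k' (hKside k' hk')
      exact hopp k k' hkk (w k) h1.2 (he ▸ h2.2)
        (bool_trichotomy _ _ _ (hKside k hk) (hKside k' hk'))
    -- at most one k in K with part (u k) = part y, similarly for w/x
    have hbad1 : #(K.filter (fun k => part (u k) = part y)) ≤ 1 := by
      by_contra hb
      obtain ⟨k, hk, k', hk', hkk⟩ := Finset.one_lt_card.1
        (show 1 < #(K.filter (fun k => part (u k) = part y)) by omega)
      have hk0 := mem_filter.1 hk
      have hk0' := mem_filter.1 hk'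
      have hne : u k ≠ u k' := husame k hk0.1 k' hk0'.1 hkk
      exact hpd (A i) (hA i) (u k) (hu k (hKside k hk0.1)).1 (u k')
        (hu k' (hKside k' hk0'.1)).1 hne (hk0.2.trans hk0'.2.symm)
    have hbad2 : #(K.filter (fun k => part (w k) = part x)) ≤ 1 := by
      by_contra hb
      obtain ⟨k, hk, k', hk', hkk⟩ := Finset.one_lt_card.1
        (show 1 < #(K.filter (fun k => part (w k) = part x)) by omega)
      have hk0 := mem_filter.1 hk
      have hk0' := mem_filter.1 hk'
      have hne : w k ≠ w k' := hwsame k hk0.1 k' hk0'.1 hkk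
      exact hpd (A j) (hA j) (w k) (hw k (hKside k hk0.1)).1 (w k')
        (hw k' (hKside k' hk0'.1)).1 hne (hk0.2.trans hk0'.2.symm)
    -- find a good k
    have hgood : ∃ k ∈ K, part (u k) ≠ part y ∧ part (w k) ≠ part x := by
      by_contra hg
      push_neg at hg
      have hsub : K ⊆ K.filter (fun k => part (u k) = part y) ∪
          K.filter (fun k => part (w k) = part x) := by
        intro k hk
        rcases Classical.em (part (u k) = part y) with h | h
        · exact Finset.mem_union_left _ (mem_filter.2 ⟨hk, h⟩)
        · exact Finset.mem_union_right _ (mem_filter.2 ⟨hk, hg k hk h⟩)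
      have := Finset.card_le_card hsub
      have := Finset.card_union_le (K.filter (fun k => part (u k) = part y))
        (K.filter (fun k => part (w k) = part x))
      omega
    obtain ⟨k, hkK, hgu, hgw⟩ := hgood
    have hks := hKside k hkK
    have hik : i ≠ k := fun h => hks (h ▸ rfl)
    have hjk : j ≠ k := fun h => hks ((h ▸ rfl : side k = side j).trans hsij.symm)
    obtain ⟨hui, huk⟩ := hu k hks
    obtain ⟨hwj, hwk⟩ := hw k hks
    -- distinctness of the four vertices
    have hxw : x ≠ w k := by
      intro h
      exact hcase k j (h ▸ hwk) hyj ⟨w k, mem_inter.2 ⟨hwk, hwj⟩⟩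
    have hxu : x ≠ u k := by
      intro h
      exact hcase k j (h ▸ huk) hyj ⟨w k, mem_inter.2 ⟨hwk, hwj⟩⟩
    have hyw : y ≠ w k := by
      intro h
      exact hcase i k hxi (h ▸ hwk) ⟨u k, mem_inter.2 ⟨hui, huk⟩⟩
    have hyu : y ≠ u k := fun h => hBA i ⟨hxi, h ▸ hui⟩
    have hwu : w k ≠ u k := by
      intro h
      exact hcase i j hxi hyj ⟨w k, mem_inter.2 ⟨h.symm ▸ hui, hwj⟩⟩
    -- rainbow 4-cycle: x -B- y -A j- w -A k- u -A i- x
    exact rainbow4 h4 hB (hA j) (hA k) (hA i)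
      (hBne j) (hBne k) (hBne i)
      (fun h => hjk (hinj h)) (fun h => hij (hinj h).symm) (fun h => hik (hinj h).symm)
      (hpd B hB x hxB y hyB hxy)
      (Ne.symm hgw)
      (hpd (A i) (hA i) x hxi (u k) hui hxu)
      (hpd (A j) (hA j) y hyj (w k) hwj hyw)
      (Ne.symm hgu)
      (hpd (A k) (hA k) (w k) hwk (u k) huk hwu)
      hxB hyB hyj hwj hwk huk hui hxi
end

section
/- Let r ≥ 4 and let H be an r-uniform r-partite linear hypergraph containing no rainbow cycles of length three or four, and assume that no vertex of H belongs to more than two edges of H. If A_1, A_2, A_3, A_4 are four pairwise disjoint edges of H, then there exists at most one edge B of H with B ∉ {A_1, A_2, A_3, A_4} such that |B ∩ (A_1 ∪ A_2 ∪ A_3 ∪ A_4)| = 4. -/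
open Finset

lemma inj4 {X : Type*} (f : Fin 4 → X) (h01 : f 0 ≠ f 1) (h02 : f 0 ≠ f 2)
    (h03 : f 0 ≠ f 3) (h12 : f 1 ≠ f 2) (h13 : f 1 ≠ f 3) (h23 : f 2 ≠ f 3) :
    Function.Injective f := by
  intro a b h
  fin_cases a <;> fin_cases b <;> first | rfl | (exfalso; simp_all)

lemma pigeon {r : ℕ} (p q : Fin 4 → Fin r) (hq : Function.Injective q) :
    ∃ i j, i ≠ j ∧ p i ≠ q j ∧ p j ≠ q i := by
  by_contra hcon
  push_neg at hcon
  have hcov : ∀ i j : Fin 4, i ≠ j → p i = q j ∨ p j = q i := by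
    intro i j hij
    by_contra h
    push_neg at h
    exact h.2 (hcon i j hij h.1)
  set S : Finset (Fin 4 × Fin 4) := univ.filter (fun ij => p ij.1 = q ij.2) with hS
  have hSle : S.card ≤ 4 := by
    have : S.card ≤ (univ : Finset (Fin 4)).card := by
      apply Finset.card_le_card_of_injOn (fun ij => ij.1) (fun _ _ => mem_univ _)
      intro a ha b hb hab
      simp [hS] at ha hb
      simp only at hab
      have : q a.2 = q b.2 := by rw [← ha, ← hb, hab]
      exact Prod.ext hab (hq this)
    simpa using this
  have hge : 6 ≤ S.card := by
    have h6 : ((univ : Finset (Fin 4 × Fin 4)).filter (fun ij => ij.1 < ij.2)).card = 6 := by decide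
    rw [← h6]
    apply Finset.card_le_card_of_injOn (fun ij => if p ij.1 = q ij.2 then ij else (ij.2, ij.1))
    · intro ij hij
      simp at hij
      by_cases h : p ij.1 = q ij.2
      · simp [hS, h]
      · have := (hcov ij.1 ij.2 hij.ne).resolve_left h
        simp [hS, h, this]
    · intro a ha b hb hab
      simp at ha hb
      by_cases h1 : p a.1 = q a.2 <;> by_cases h2 : p b.1 = q b.2 <;> simp [h1, h2] at hab
      · exact hab
      · subst hab; simp at ha; exact absurd ha (lt_asymm hb)
      · subst hab; simp at hb; exact absurd hb (lt_asymm ha)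
      · exact Prod.ext hab.2 hab.1
  omega

theorem at_most_one_transversal_edge {V : Type*} [DecidableEq V] (r : ℕ) (hr : 4 ≤ r)
    (H : Finset (Finset V)) (part : V → Fin r)
    (hpart : ∀ A ∈ H, ∀ i : Fin r, (A.filter fun x => part x = i).card = 1)
    (hlin : ∀ A ∈ H, ∀ B ∈ H, A ≠ B → (A ∩ B).card ≤ 1)
    (h3 : ¬ HasRainbowCycle H part 3) (h4 : ¬ HasRainbowCycle H part 4)
    (hdeg : ∀ x : V, (H.filter fun A => x ∈ A).card ≤ 2)
    (A : Fin 4 → Finset V) (hA : ∀ i, A i ∈ H)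
    (hdisj : ∀ i j, i ≠ j → Disjoint (A i) (A j)) :
    ∀ B ∈ H, ∀ C ∈ H, (∀ i, B ≠ A i) → (∀ i, C ≠ A i) →
      (B ∩ (Finset.univ : Finset (Fin 4)).biUnion A).card = 4 →
      (C ∩ (Finset.univ : Finset (Fin 4)).biUnion A).card = 4 → B = C := by
  have hpv : ∀ E ∈ H, ∀ x ∈ E, ∀ y ∈ E, part x = part y → x = y := by
    intro E hE x hx y hy hxy
    have h1 := hpart E hE (part y)
    have hle : (E.filter fun z => part z = part y).card ≤ 1 := le_of_eq h1
    exact Finset.card_le_one.mp hle x (mem_filter.mpr ⟨hx, hxy⟩) y (mem_filter.mpr ⟨hy, rfl⟩)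
  have key : ∀ B ∈ H, (∀ i, B ≠ A i) →
      (B ∩ (Finset.univ : Finset (Fin 4)).biUnion A).card = 4 →
      ∃ b : Fin 4 → V, ∀ i, B ∩ A i = {b i} := by
    intro B hB hBA hcard
    have hinter : B ∩ (univ : Finset (Fin 4)).biUnion A
        = (univ : Finset (Fin 4)).biUnion (fun i => B ∩ A i) := by
      ext x; simp [and_comm]
    rw [hinter, Finset.card_biUnion] at hcard
    · have hle : ∀ i, (B ∩ A i).card ≤ 1 := fun i => hlin B hB (A i) (hA i) (hBA i)
      have heq : ∀ i, (B ∩ A i).card = 1 := by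
        by_contra hne
        push_neg at hne
        obtain ⟨i, hi⟩ := hne
        have hi0 : (B ∩ A i).card = 0 := by have := hle i; omega
        have hsplit := Finset.sum_eq_sum_sdiff_singleton_add (mem_univ i)
          (fun k => (B ∩ A k).card)
        have hrest : ∑ k ∈ univ \ {i}, (B ∩ A k).card ≤ (univ \ {i} : Finset (Fin 4)).card • 1 :=
          Finset.sum_le_card_nsmul _ _ 1 (fun k _ => hle k)
        have hcard4 : (univ \ {i} : Finset (Fin 4)).card = 3 := by
          rw [Finset.card_sdiff_of_subset (by simp)]; simp
        rw [hcard4] at hrest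
        simp only [smul_eq_mul] at hrest
        omega
      have : ∀ i : Fin 4, ∃ x, B ∩ A i = {x} := fun i => Finset.card_eq_one.mp (heq i)
      choose b hb using this
      exact ⟨b, hb⟩
    · intro i _ j _ hij
      exact (hdisj i j hij).mono inter_subset_right inter_subset_right
  intro B hB C hC hBA hCA hcB hcC
  by_contra hBC
  obtain ⟨b, hb⟩ := key B hB hBA hcB
  obtain ⟨c, hc⟩ := key C hC hCA hcC
  have hbB : ∀ i, b i ∈ B := by
    intro i
    have : b i ∈ B ∩ A i := by rw [hb i]; exact mem_singleton_self _
    exact (mem_inter.mp this).1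
  have hbA : ∀ i, b i ∈ A i := by
    intro i
    have : b i ∈ B ∩ A i := by rw [hb i]; exact mem_singleton_self _
    exact (mem_inter.mp this).2
  have hcC' : ∀ i, c i ∈ C := by
    intro i
    have : c i ∈ C ∩ A i := by rw [hc i]; exact mem_singleton_self _
    exact (mem_inter.mp this).1
  have hcA : ∀ i, c i ∈ A i := by
    intro i
    have : c i ∈ C ∩ A i := by rw [hc i]; exact mem_singleton_self _
    exact (mem_inter.mp this).2
  have hbc : ∀ i, b i ≠ c i := by
    intro i h
    have hsub : ({A i, B, C} : Finset (Finset V)) ⊆ H.filter (fun E => b i ∈ E) := by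
      intro E hE
      simp only [mem_insert, mem_singleton] at hE
      rcases hE with rfl | rfl | rfl
      · exact mem_filter.mpr ⟨hA i, hbA i⟩
      · exact mem_filter.mpr ⟨hB, hbB i⟩
      · exact mem_filter.mpr ⟨hC, h ▸ hcC' i⟩
    have hc3 : ({A i, B, C} : Finset (Finset V)).card = 3 := by
      rw [Finset.card_insert_of_notMem, Finset.card_insert_of_notMem, Finset.card_singleton]
      · simp [hBC]
      · simp only [mem_insert, mem_singleton]
        push_neg
        exact ⟨(hBA i).symm, (hCA i).symm⟩
    have := Finset.card_le_card hsub
    have := hdeg (b i)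
    omega
  have hvd : ∀ (i j : Fin 4) (x y : V), i ≠ j → x ∈ A i → y ∈ A j → x ≠ y := by
    intro i j x y hij hx hy h
    subst h
    exact Finset.disjoint_left.mp (hdisj i j hij) hx hy
  have hpb : ∀ i j, i ≠ j → part (b i) ≠ part (b j) :=
    fun i j hij h => hvd i j (b i) (b j) hij (hbA i) (hbA j) (hpv B hB _ (hbB i) _ (hbB j) h)
  have hpc : ∀ i j, i ≠ j → part (c i) ≠ part (c j) :=
    fun i j hij h => hvd i j (c i) (c j) hij (hcA i) (hcA j) (hpv C hC _ (hcC' i) _ (hcC' j) h)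
  have hpbc : ∀ i, part (b i) ≠ part (c i) :=
    fun i h => hbc i (hpv (A i) (hA i) _ (hbA i) _ (hcA i) h)
  obtain ⟨i, j, hij, hij1, hij2⟩ := pigeon (fun i => part (b i)) (fun i => part (c i))
    (fun a a' h => by
      by_contra hne
      exact hpc a a' hne h)
  apply h4
  have hji : j ≠ i := fun e => hij e.symm
  have hpinj : Function.Injective (fun a => part (![b i, b j, c j, c i] a)) := by
    apply inj4 <;> simp only [Matrix.cons_val_zero, Matrix.cons_val_one, Matrix.head_cons,
      Matrix.cons_val_two, Matrix.tail_cons, Matrix.cons_val_three]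
    · exact hpb i j hij
    · exact hij1
    · exact hpbc i
    · exact hpbc j
    · exact hij2
    · exact hpc j i hji
  refine ⟨![b i, b j, c j, c i], ![B, A j, C, A i], ?_, ?_, ?_, ?_, hpinj⟩
  · exact fun a a' h => hpinj (congrArg part h)
  · apply inj4 <;> simp only [Matrix.cons_val_zero, Matrix.cons_val_one, Matrix.head_cons,
      Matrix.cons_val_two, Matrix.tail_cons, Matrix.cons_val_three]
    · exact hBA j
    · exact hBC
    · exact hBA i
    · exact fun h => hCA j h.symm
    · exact fun h => hvd j i (b j) (b j) hji (hbA j) (h ▸ hbA j) rfl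
    · exact hCA i
  · intro k
    fin_cases k <;> simp only [Matrix.cons_val_zero, Matrix.cons_val_one, Matrix.head_cons,
      Matrix.cons_val_two, Matrix.tail_cons, Matrix.cons_val_three]
    · exact hB
    · exact hA j
    · exact hC
    · exact hA i
  · intro k
    fin_cases k <;>
      simp only [finRotate_succ_apply, Matrix.cons_val_zero, Matrix.cons_val_one,
        Matrix.head_cons, Matrix.cons_val_two, Matrix.tail_cons, Matrix.cons_val_three]
    · exact ⟨hbB i, by norm_num; exact hbB j⟩
    · exact ⟨hbA j, by norm_num; exact hcA j⟩
    · exact ⟨hcC' j, by norm_num; exact hcC' i⟩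
    · exact ⟨hcA i, by norm_num; exact hbA i⟩
end

section
/- Let e ≥ 4 and r ≥ 3 be integers and let H be an r-uniform r-partite linear hypergraph that is G_r(3r−3, 3)-free and G_r((e−1)(r−2)+3, e−1)-free. Suppose A_1, …, A_e are e distinct edges of H with |A_1 ∪ ⋯ ∪ A_e| ≤ e(r−2)+3. Then for every i ∈ {1, …, e} there exist three distinct indices i_1, i_2, i_3 ∈ {1, …, e} \ {i} such that: (1) |A_i ∩ (A_{i_1} ∪ A_{i_2} ∪ A_{i_3})| = 3 with A_i meeting each of A_{i_1}, A_{i_2}, A_{i_3} in a distinct vertex; (2) A_{i_1}, A_{i_2}, A_{i_3} are pairwise disjoint; (3) |A_{i_1} ∪ A_{i_2} ∪ A_{i_3} ∪ A_i| = 4r−3. -/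
open Finset

theorem three_special_edges {V : Type*} [DecidableEq V] (r e : ℕ) (hr : 3 ≤ r) (he : 4 ≤ e)
    (H : Finset (Finset V)) (part : V → Fin r)
    (hpart : ∀ A ∈ H, ∀ i : Fin r, (A.filter fun x => part x = i).card = 1)
    (hlin : ∀ A ∈ H, ∀ B ∈ H, A ≠ B → (A ∩ B).card ≤ 1)
    (hfree3 : GFree H (3 * r - 3) 3)
    (hfree : GFree H ((e - 1) * (r - 2) + 3) (e - 1))
    (A : Fin e → Finset V) (hA : ∀ i, A i ∈ H) (hinj : Function.Injective A)
    (hcard : ((Finset.univ : Finset (Fin e)).biUnion A).card ≤ e * (r - 2) + 3) :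
    ∀ i : Fin e, ∃ i₁ i₂ i₃ : Fin e,
      i₁ ≠ i ∧ i₂ ≠ i ∧ i₃ ≠ i ∧ i₁ ≠ i₂ ∧ i₁ ≠ i₃ ∧ i₂ ≠ i₃ ∧
      (A i ∩ A i₁).card = 1 ∧ (A i ∩ A i₂).card = 1 ∧ (A i ∩ A i₃).card = 1 ∧
      (A i ∩ (A i₁ ∪ A i₂ ∪ A i₃)).card = 3 ∧
      Disjoint (A i₁) (A i₂) ∧ Disjoint (A i₁) (A i₃) ∧ Disjoint (A i₂) (A i₃) ∧
      (A i₁ ∪ A i₂ ∪ A i₃ ∪ A i).card = 4 * r - 3 := by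
  classical
  have hcardA : ∀ B ∈ H, B.card = r := by
    intro B hB
    rw [Finset.card_eq_sum_card_fiberwise (fun x _ => Finset.mem_univ (part x))]
    simp [hpart B hB]
  have hAne : ∀ j k : Fin e, j ≠ k → A j ≠ A k := fun j k h hh => h (hinj hh)
  have hAr : ∀ j, (A j).card = r := fun j => hcardA _ (hA j)
  intro i
  set Ui : Finset V := (Finset.univ.erase i).biUnion A with hUidef
  have hUiH : ((Finset.univ.erase i).image A) ⊆ H := by
    intro B hB
    obtain ⟨j, _, rfl⟩ := Finset.mem_image.mp hB
    exact hA j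
  have hUicard : ((Finset.univ.erase i).image A).card = e - 1 := by
    rw [Finset.card_image_of_injective _ hinj, Finset.card_erase_of_mem (Finset.mem_univ i)]
    simp
  have hUibig : (e - 1) * (r - 2) + 3 + 1 ≤ Ui.card := by
    have h := hfree _ hUiH hUicard
    have heq : ((Finset.univ.erase i).image A).biUnion id = Ui := by
      ext x; simp [hUidef]
    rwa [heq] at h
  have hUnion : (Finset.univ : Finset (Fin e)).biUnion A = A i ∪ Ui := by
    ext x
    simp only [Finset.mem_biUnion, Finset.mem_univ, true_and, Finset.mem_union, hUidef,
      Finset.mem_erase]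
    constructor
    · rintro ⟨j, hj⟩
      by_cases h : j = i
      · exact Or.inl (h ▸ hj)
      · exact Or.inr ⟨j, ⟨h, trivial⟩, hj⟩
    · rintro (h | ⟨j, _, hj⟩)
      exacts [⟨i, h⟩, ⟨j, hj⟩]
  have hinter3 : 3 ≤ (A i ∩ Ui).card := by
    have h1 := Finset.card_union_add_card_inter (A i) Ui
    have h2 : (A i ∪ Ui).card ≤ e * (r - 2) + 3 := hUnion ▸ hcard
    have hmn : e * (r - 2) = (e - 1) * (r - 2) + (r - 2) := by
      cases e with
      | zero => exact absurd he (by norm_num)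
      | succ n => rw [Nat.succ_sub_one, Nat.succ_mul]
    have hAri := hAr i
    generalize hm : (e - 1) * (r - 2) = m at *
    generalize hn : e * (r - 2) = n at *
    omega
  obtain ⟨T, hTsub, hT3⟩ := Finset.exists_subset_card_eq hinter3
  obtain ⟨x₁, x₂, x₃, hx12, hx13, hx23, rfl⟩ := Finset.card_eq_three.mp hT3
  have key : ∀ j : Fin e, j ≠ i → ∀ x, x ∈ A i → x ∈ A j → A i ∩ A j = {x} := by
    intro j hj x hxi hxj
    have hle := hlin _ (hA i) _ (hA j) (hAne i j (Ne.symm hj))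
    have hmem : x ∈ A i ∩ A j := Finset.mem_inter.mpr ⟨hxi, hxj⟩
    refine Finset.eq_singleton_iff_unique_mem.mpr ⟨hmem, ?_⟩
    intro y hy
    exact Finset.card_le_one.mp hle y hy x hmem
  have hget : ∀ x : V, x ∈ ({x₁, x₂, x₃} : Finset V) →
      ∃ j : Fin e, j ≠ i ∧ A i ∩ A j = {x} := by
    intro x hx
    have hx' := hTsub hx
    have hxAi := (Finset.mem_inter.mp hx').1
    have hxUi := (Finset.mem_inter.mp hx').2
    obtain ⟨j, hjmem, hxj⟩ := Finset.mem_biUnion.mp hxUi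
    exact ⟨j, (Finset.mem_erase.mp hjmem).1, key j (Finset.mem_erase.mp hjmem).1 x hxAi hxj⟩
  obtain ⟨j₁, hj₁ne, hsing₁⟩ := hget x₁ (by simp)
  obtain ⟨j₂, hj₂ne, hsing₂⟩ := hget x₂ (by simp)
  obtain ⟨j₃, hj₃ne, hsing₃⟩ := hget x₃ (by simp)
  have hjne : ∀ j k : Fin e, ∀ x y : V, A i ∩ A j = {x} → A i ∩ A k = {y} → x ≠ y → j ≠ k := by
    intro j k x y hx hy hxy h
    subst h
    rw [hx] at hy
    exact hxy (Finset.singleton_injective hy)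
  have hj12 := hjne j₁ j₂ x₁ x₂ hsing₁ hsing₂ hx12
  have hj13 := hjne j₁ j₃ x₁ x₃ hsing₁ hsing₃ hx13
  have hj23 := hjne j₂ j₃ x₂ x₃ hsing₂ hsing₃ hx23
  have disj : ∀ j k : Fin e, j ≠ i → k ≠ i → j ≠ k → ∀ x y : V,
      A i ∩ A j = {x} → A i ∩ A k = {y} → x ≠ y → Disjoint (A j) (A k) := by
    intro j k hj hk hjk x y hx hy hxy
    have hS : ({A j, A k, A i} : Finset (Finset V)) ⊆ H := by
      intro B hB
      simp only [Finset.mem_insert, Finset.mem_singleton] at hB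
      rcases hB with rfl | rfl | rfl <;> exact hA _
    have hScard : ({A j, A k, A i} : Finset (Finset V)).card = 3 := by
      rw [Finset.card_insert_of_notMem (by simp [hAne j k hjk, hAne j i hj]),
        Finset.card_insert_of_notMem (by simp [hAne k i hk]), Finset.card_singleton]
    have hfr := hfree3 _ hS hScard
    have hbU : ({A j, A k, A i} : Finset (Finset V)).biUnion id = A j ∪ A k ∪ A i := by
      ext z; simp [or_assoc]
    rw [hbU] at hfr
    have h1 := Finset.card_union_add_card_inter (A j ∪ A k) (A i)
    have h2 := Finset.card_union_add_card_inter (A j) (A k)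
    have h3 : ((A j ∪ A k) ∩ A i) = {x, y} := by
      rw [Finset.union_inter_distrib_right, Finset.inter_comm (A j), Finset.inter_comm (A k),
        hx, hy]
      ext z; simp
    rw [h3] at h1
    have hpair : ({x, y} : Finset V).card = 2 := Finset.card_pair hxy
    rw [hpair, hAr i] at h1
    rw [hAr j, hAr k] at h2
    have hz : (A j ∩ A k).card = 0 := by omega
    exact Finset.disjoint_iff_inter_eq_empty.mpr (Finset.card_eq_zero.mp hz)
  have d12 := disj j₁ j₂ hj₁ne hj₂ne hj12 x₁ x₂ hsing₁ hsing₂ hx12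
  have d13 := disj j₁ j₃ hj₁ne hj₃ne hj13 x₁ x₃ hsing₁ hsing₃ hx13
  have d23 := disj j₂ j₃ hj₂ne hj₃ne hj23 x₂ x₃ hsing₂ hsing₃ hx23
  have hI3 : (A i ∩ (A j₁ ∪ A j₂ ∪ A j₃)).card = 3 := by
    rw [Finset.inter_union_distrib_left, Finset.inter_union_distrib_left,
      hsing₁, hsing₂, hsing₃]
    have hxyz : ({x₁} ∪ {x₂} ∪ {x₃} : Finset V) = {x₁, x₂, x₃} := by
      ext z; simp [or_assoc]
    rw [hxyz, Finset.card_insert_of_notMem (by simp [hx12, hx13]),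
      Finset.card_insert_of_notMem (by simp [hx23]), Finset.card_singleton]
  have hW : (A j₁ ∪ A j₂ ∪ A j₃).card = 3 * r := by
    rw [Finset.card_union_of_disjoint (by rw [Finset.disjoint_union_left]; exact ⟨d13, d23⟩),
      Finset.card_union_of_disjoint d12, hAr, hAr, hAr]
    ring
  have h4 := Finset.card_union_add_card_inter (A j₁ ∪ A j₂ ∪ A j₃) (A i)
  rw [Finset.inter_comm, hI3, hW, hAr i] at h4
  refine ⟨j₁, j₂, j₃, hj₁ne, hj₂ne, hj₃ne, hj12, hj13, hj23,
    by rw [hsing₁]; exact Finset.card_singleton _,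
    by rw [hsing₂]; exact Finset.card_singleton _,
    by rw [hsing₃]; exact Finset.card_singleton _,
    hI3, d12, d13, d23, by omega⟩
end
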